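/- arXiv:2506.11265 — 3 statements merged into one kernel-verified Lean document; each statement's English description precedes it below -/
import Mathlib

section
/- Any two topes of an (n,d)-pre-trianguloid are compatible with each other. Consequently, every (n,d)-pre-trianguloid is an extended (n,d)-tope arrangement. -/
open Finset

/-- A bipartite graph between `α` and `β`, identified with its edge set. -/
abbrev BGraph (α β : Type*) := Finset (α × β)

section BipartiteDefs

variable {α β : Type*} [DecidableEq α] [DecidableEq β]

/-- Left degree vector. -/
def LD (G : BGraph α β) (a : α) : ℕ := (G.filter fun e => e.1 = a).card

/-- Right degree vector. -/
def RD (G : BGraph α β) (b : β) : ℕ := (G.filter fun e => e.2 = b).card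

/-- The simple graph on `α ⊕ β` associated to a bipartite edge set. -/
def toGraph (G : BGraph α β) : SimpleGraph (α ⊕ β) :=
  SimpleGraph.fromRel fun x y => ∃ a b, x = Sum.inl a ∧ y = Sum.inr b ∧ (a, b) ∈ G

/-- Acyclicity of a bipartite edge set. -/
def Acyclic (G : BGraph α β) : Prop := (toGraph G).IsAcyclic

/-- `U` is a tree on the vertex set `I ⊔ J`. -/
def IsTreeOn (U : BGraph α β) (I : Finset α) (J : Finset β) : Prop :=
  (∀ e ∈ U, e.1 ∈ I ∧ e.2 ∈ J) ∧ Acyclic U ∧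
    ∀ x y : α ⊕ β, Sum.elim (· ∈ I) (· ∈ J) x → Sum.elim (· ∈ I) (· ∈ J) y →
      (toGraph U).Reachable x y

/-- `M` is a perfect matching between `I` and `J`. -/
def IsMatching (M : BGraph α β) (I : Finset α) (J : Finset β) : Prop :=
  (∀ e ∈ M, e.1 ∈ I ∧ e.2 ∈ J) ∧ (∀ a ∈ I, ∃! b : β, (a, b) ∈ M) ∧
    ∀ b ∈ J, ∃! a : α, (a, b) ∈ M

/-- Compatibility of two bipartite graphs. -/
def Compatible (G G' : BGraph α β) : Prop :=
  ∀ (I : Finset α) (J : Finset β) (M M' : BGraph α β),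
    M ⊆ G → M' ⊆ G' → IsMatching M I J → IsMatching M' I J → M = M'

end BipartiteDefs

section TopeDefs

variable {n d : ℕ}

/-- The graph of a tope `T : [n] → [d]`. -/
def topeGraph (T : Fin n → Fin d) : BGraph (Fin n) (Fin d) :=
  Finset.univ.image fun i => (i, T i)

/-- The position (right degree vector) of a tope. -/
def topePos (T : Fin n → Fin d) : Fin d → ℕ :=
  fun j => (Finset.univ.filter fun i => T i = j).card

/-- Standard unit vector `e_j`. -/
def unitVec (j : Fin d) : Fin d → ℕ := fun k => if k = j then 1 else 0

end TopeDefs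

section Aux


variable {n d N : ℕ}

/-- fiber of a color within a ground set -/
def fibS (S : Finset (Fin n)) (f : Fin n → Fin d) (a : Fin d) : Finset (Fin n) :=
  S.filter (fun i => f i = a)

lemma mem_fibS {S : Finset (Fin n)} {f : Fin n → Fin d} {a : Fin d} {z : Fin n} :
    z ∈ fibS S f a ↔ z ∈ S ∧ f z = a := Finset.mem_filter

lemma sum_add_unitVec (u : Fin d → ℕ) (j : Fin d) :
    (∑ k, (u + unitVec j) k) = (∑ k, u k) + 1 := by
  have : ∀ k, (u + unitVec j) k = u k + unitVec j k := fun k => rfl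
  simp only [this, Finset.sum_add_distrib]
  congr 1
  simp [unitVec]

lemma lemW (S : Finset (Fin n)) (T : (Fin d → ℕ) → Fin n → Fin d)
    (hpos : ∀ v : Fin d → ℕ, (∑ j, v j) = N → ∀ a, (fibS S (T v) a).card = v a)
    (hsec : ∀ (u : Fin d → ℕ) (j j' : Fin d), (∑ k, u k) + 1 = N →
      ∀ i ∈ S, T (u + unitVec j') i = j → T (u + unitVec j) i = j)
    (u : Fin d → ℕ) (hu : (∑ k, u k) + 1 = N) (p q : Fin d)
    (r : ℕ) (hr : 2 ≤ r) (x : ℕ → Fin n) (b : ℕ → Fin d)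
    (hxS : ∀ t, 1 ≤ t → t ≤ r → x t ∈ S)
    (hbd : ∀ s t, 1 ≤ s → s < t → t ≤ r → b s ≠ b t)
    (hbp : ∀ t, 1 ≤ t → t ≤ r → b t ≠ p)
    (hbq : ∀ t, 1 ≤ t → t ≤ r → b t ≠ q)
    (hf : ∀ t, 1 ≤ t → t ≤ r → T (u + unitVec p) (x t) = b t)
    (hg : ∀ t, 1 ≤ t → t < r → T (u + unitVec q) (x t) = b (t+1))
    (hgr : T (u + unitVec q) (x r) = b 1) : False := by
  have hsum : ∀ s : Fin d, (∑ k, (u + unitVec s) k) = N := fun s => by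
    rw [sum_add_unitVec]; exact hu
  have hcard : ∀ s a : Fin d,
      (fibS S (T (u + unitVec s)) a).card = u a + (if a = s then 1 else 0) := by
    intro s a
    have h := hpos _ (hsum s) a
    have : (u + unitVec s) a = u a + (if a = s then 1 else 0) := rfl
    rw [h, this]
  have hincl : ∀ (s a : Fin d) (z : Fin n), z ∈ S →
      T (u + unitVec s) z = a → T (u + unitVec a) z = a :=
    fun s a z hz h => hsec u a s hu z hz h
  -- key: fiber of b t in the tope raised at b t
  have key : ∀ t, 1 ≤ t → t ≤ r →
      fibS S (T (u + unitVec (b t))) (b t)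
        = insert (x (if t = 1 then r else t - 1)) (fibS S (T (u + unitVec p)) (b t)) := by
    intro t ht1 htr
    set pt := if t = 1 then r else t - 1 with hpt
    have hpt1 : 1 ≤ pt := by
      rcases eq_or_ne t 1 with h | h
      · simp [hpt, h]; omega
      · simp [hpt, h]; omega
    have hptr : pt ≤ r := by
      rcases eq_or_ne t 1 with h | h
      · simp [hpt, h]
      · simp [hpt, h]; omega
    have hptne : b pt ≠ b t := by
      rcases eq_or_ne t 1 with h | h
      · subst h; simp only [hpt, if_pos rfl]
        exact (hbd 1 r (le_refl 1) (by omega) (le_refl r)).symm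
      · have : pt = t - 1 := by simp [hpt, h]
        rw [this]
        exact hbd (t-1) t (by omega) (by omega) htr
    have hgpt : T (u + unitVec q) (x pt) = b t := by
      rcases eq_or_ne t 1 with h | h
      · subst h; simpa [hpt] using hgr
      · have hpte : pt = t - 1 := by simp [hpt, h]
        have := hg (t-1) (by omega) (by omega)
        rw [hpte]; rw [this]; congr 1; omega
    have hxpt : x pt ∈ S := hxS pt hpt1 hptr
    have hsub : insert (x pt) (fibS S (T (u + unitVec p)) (b t))
        ⊆ fibS S (T (u + unitVec (b t))) (b t) := by
      intro z hz
      rcases Finset.mem_insert.mp hz with h | h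
      · subst h
        exact mem_fibS.mpr ⟨hxpt, hincl q (b t) (x pt) hxpt hgpt⟩
      · obtain ⟨hzS, hzf⟩ := mem_fibS.mp h
        exact mem_fibS.mpr ⟨hzS, hincl p (b t) z hzS hzf⟩
    have hnotmem : x pt ∉ fibS S (T (u + unitVec p)) (b t) := by
      intro hmem
      obtain ⟨_, hcol⟩ := mem_fibS.mp hmem
      exact hptne (by rw [← hcol, hf pt hpt1 hptr])
    have hcards : (fibS S (T (u + unitVec (b t))) (b t)).card
        ≤ (insert (x pt) (fibS S (T (u + unitVec p)) (b t))).card := by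
      rw [Finset.card_insert_of_notMem hnotmem, hcard p (b t), hcard (b t) (b t)]
      simp [hbp t ht1 htr]
    exact (Finset.eq_of_subset_of_card_le hsub hcards).symm
  -- the chase
  have chase : ∀ t, 1 ≤ t → t ≤ r → T (u + unitVec (b 1)) (x t) = b t := by
    intro t
    induction t with
    | zero => omega
    | succ t ih =>
      intro h1 hsr
      rcases Nat.eq_or_lt_of_le h1 with h | h
      · -- t + 1 = 1
        have ht0 : t = 0 := by omega
        subst ht0
        exact hincl p (b 1) (x 1) (hxS 1 le_rfl (by omega)) (hf 1 le_rfl (by omega))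
      · -- t ≥ 1
        have ht1 : 1 ≤ t := by omega
        have htr : t ≤ r := by omega
        have hCt := ih ht1 htr
        -- E : fiber of b (t+1) under h1 equals fiber under f
        have hkey := key (t+1) (by omega) hsr
        have hEsub : fibS S (T (u + unitVec (b 1))) (b (t+1))
            ⊆ fibS S (T (u + unitVec p)) (b (t+1)) := by
          intro z hz
          obtain ⟨hzS, hzc⟩ := mem_fibS.mp hz
          have hzin : z ∈ fibS S (T (u + unitVec (b (t+1)))) (b (t+1)) :=
            mem_fibS.mpr ⟨hzS, hincl (b 1) (b (t+1)) z hzS hzc⟩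
          rw [hkey] at hzin
          have hpteq : (if t + 1 = 1 then r else t + 1 - 1) = t := by
            simp; omega
          rw [hpteq] at hzin
          rcases Finset.mem_insert.mp hzin with h' | h'
          · exact absurd (h' ▸ hzc) (by rw [hCt]; exact hbd t (t+1) ht1 (by omega) hsr)
          · exact h'
        have hb1ne : b (t+1) ≠ b 1 := (hbd 1 (t+1) le_rfl (by omega) hsr).symm
        have hEcard : (fibS S (T (u + unitVec p)) (b (t+1))).card
            ≤ (fibS S (T (u + unitVec (b 1))) (b (t+1))).card := by
          rw [hcard p (b (t+1)), hcard (b 1) (b (t+1))]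
          simp [hbp (t+1) (by omega) hsr, hb1ne]
        have hE := Finset.eq_of_subset_of_card_le hEsub hEcard
        have : x (t+1) ∈ fibS S (T (u + unitVec p)) (b (t+1)) :=
          mem_fibS.mpr ⟨hxS (t+1) (by omega) hsr, hf (t+1) (by omega) hsr⟩
        rw [← hE] at this
        exact (mem_fibS.mp this).2
  have hC : T (u + unitVec (b 1)) (x r) = b r := chase r (by omega) le_rfl
  have hC1 : T (u + unitVec (b 1)) (x r) = b 1 :=
    hincl q (b 1) (x r) (hxS r (by omega) le_rfl) hgr
  exact hbd 1 r le_rfl (by omega) le_rfl (by rw [← hC, hC1])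


lemma claimU (S : Finset (Fin n)) (T : (Fin d → ℕ) → Fin n → Fin d)
    (hpos : ∀ v : Fin d → ℕ, (∑ j, v j) = N → ∀ a, (fibS S (T v) a).card = v a)
    (hsec : ∀ (u : Fin d → ℕ) (j j' : Fin d), (∑ k, u k) + 1 = N →
      ∀ i ∈ S, T (u + unitVec j') i = j → T (u + unitVec j) i = j)
    (u : Fin d → ℕ) (hu : (∑ k, u k) + 1 = N)
    (istar : Fin n) (hiS : istar ∈ S) (c c' : Fin d)
    (hc : T (u + unitVec c) istar = c) (hc' : T (u + unitVec c') istar = c') :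
    ∀ i ∈ S, i ≠ istar → T (u + unitVec c) i = T (u + unitVec c') i := by
  rcases eq_or_ne c c' with hcc | hcc
  · subst hcc; intro i _ _; rfl
  set f := T (u + unitVec c) with hfdef
  set g := T (u + unitVec c') with hgdef
  have hsum : ∀ s : Fin d, (∑ k, (u + unitVec s) k) = N := fun s => by
    rw [sum_add_unitVec]; exact hu
  have hcard : ∀ s a : Fin d,
      (fibS S (T (u + unitVec s)) a).card = u a + (if a = s then 1 else 0) := by
    intro s a
    have h := hpos _ (hsum s) a
    have h2 : (u + unitVec s) a = u a + (if a = s then 1 else 0) := rfl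
    rw [h, h2]
  have hincl : ∀ (s a : Fin d) (z : Fin n), z ∈ S →
      T (u + unitVec s) z = a → T (u + unitVec a) z = a :=
    fun s a z hz h => hsec u a s hu z hz h
  -- F1 : fib g c = (fib f c).erase istar
  have hF1 : fibS S g c = (fibS S f c).erase istar := by
    have hsub : fibS S g c ⊆ (fibS S f c).erase istar := by
      intro z hz
      obtain ⟨hzS, hzc⟩ := mem_fibS.mp hz
      refine Finset.mem_erase.mpr ⟨?_, mem_fibS.mpr ⟨hzS, hincl c' c z hzS hzc⟩⟩
      rintro rfl
      exact hcc (by rw [← hzc, hc'])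
    have hicm : istar ∈ fibS S f c := mem_fibS.mpr ⟨hiS, hc⟩
    have hcards : ((fibS S f c).erase istar).card ≤ (fibS S g c).card := by
      rw [Finset.card_erase_of_mem hicm, hcard c c, hcard c' c]
      simp [hcc]
    exact Finset.eq_of_subset_of_card_le hsub hcards
  have hF2 : fibS S f c' = (fibS S g c').erase istar := by
    have hsub : fibS S f c' ⊆ (fibS S g c').erase istar := by
      intro z hz
      obtain ⟨hzS, hzc⟩ := mem_fibS.mp hz
      refine Finset.mem_erase.mpr ⟨?_, mem_fibS.mpr ⟨hzS, hincl c c' z hzS hzc⟩⟩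
      rintro rfl
      exact hcc (by rw [← hzc, hc])
    have hicm : istar ∈ fibS S g c' := mem_fibS.mpr ⟨hiS, hc'⟩
    have hcards : ((fibS S g c').erase istar).card ≤ (fibS S f c').card := by
      rw [Finset.card_erase_of_mem hicm, hcard c' c', hcard c c']
      simp [Ne.symm hcc]
    exact Finset.eq_of_subset_of_card_le hsub hcards
  -- colors of disagreeing elements avoid c, c'
  have hD : ∀ x ∈ S, x ≠ istar → f x ≠ g x →
      f x ≠ c ∧ f x ≠ c' ∧ g x ≠ c ∧ g x ≠ c' := by
    intro x hxS hxi hxfg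
    refine ⟨?_, ?_, ?_, ?_⟩
    · intro h
      have : x ∈ (fibS S f c).erase istar := Finset.mem_erase.mpr ⟨hxi, mem_fibS.mpr ⟨hxS, h⟩⟩
      rw [← hF1] at this
      exact hxfg (by rw [h, (mem_fibS.mp this).2])
    · intro h
      have : x ∈ fibS S f c' := mem_fibS.mpr ⟨hxS, h⟩
      rw [hF2] at this
      exact hxfg (by rw [h, (mem_fibS.mp (Finset.mem_of_mem_erase this)).2])
    · intro h
      have : x ∈ fibS S g c := mem_fibS.mpr ⟨hxS, h⟩
      rw [hF1] at this
      exact hxfg (by rw [(mem_fibS.mp (Finset.mem_of_mem_erase this)).2, h])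
    · intro h
      have : x ∈ (fibS S g c').erase istar := Finset.mem_erase.mpr ⟨hxi, mem_fibS.mpr ⟨hxS, h⟩⟩
      rw [← hF2] at this
      exact hxfg (by rw [(mem_fibS.mp this).2, h])
  -- successor
  have hsucc : ∀ x, (x ∈ S ∧ x ≠ istar ∧ f x ≠ g x) →
      ∃ x', (x' ∈ S ∧ x' ≠ istar ∧ f x' ≠ g x') ∧ f x' = g x := by
    rintro x ⟨hxS, hxi, hxfg⟩
    obtain ⟨_, _, hgc, hgc'⟩ := hD x hxS hxi hxfg
    set b := g x with hb
    have hcards : (fibS S f b).card = (fibS S g b).card := by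
      rw [hcard c b, hcard c' b]
      simp [hgc, hgc']
    have hxg : x ∈ fibS S g b := mem_fibS.mpr ⟨hxS, rfl⟩
    have hxf : x ∉ fibS S f b := fun h => hxfg ((mem_fibS.mp h).2)
    have : ¬ (fibS S f b ⊆ fibS S g b) := by
      intro hsub
      have := Finset.eq_of_subset_of_card_le hsub (le_of_eq hcards.symm)
      rw [this] at hxf
      exact hxf hxg
    obtain ⟨x', hx'f, hx'g⟩ := Finset.not_subset.mp this
    obtain ⟨hx'S, hx'col⟩ := mem_fibS.mp hx'f
    have hx'ne : f x' ≠ g x' := by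
      intro h
      exact hx'g (mem_fibS.mpr ⟨hx'S, by rw [← h, hx'col]⟩)
    have hx'istar : x' ≠ istar := by
      rintro rfl
      have hb2 : b = c := by rw [← hx'col]; exact hc
      exact hgc hb2
    exact ⟨x', ⟨hx'S, hx'istar, hx'ne⟩, hx'col⟩
  -- main argument by contradiction
  intro i hiS' hine
  by_contra hcon
  -- build the walk
  let D : Fin n → Prop := fun z => z ∈ S ∧ z ≠ istar ∧ f z ≠ g z
  let Φ : {z // D z} → {z // D z} := fun z =>
    ⟨Classical.choose (hsucc z.1 z.2), (Classical.choose_spec (hsucc z.1 z.2)).1⟩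
  have hΦ : ∀ z : {z // D z}, f (Φ z).1 = g z.1 :=
    fun z => (Classical.choose_spec (hsucc z.1 z.2)).2
  let z0 : {z // D z} := ⟨i, hiS', hine, hcon⟩
  let seq : ℕ → {z // D z} := fun k => Φ^[k] z0
  have hseqsucc : ∀ k, seq (k+1) = Φ (seq k) := fun k => Function.iterate_succ_apply' Φ k z0
  let β : ℕ → Fin d := fun k => f (seq k).1
  have hβsucc : ∀ k, β (k+1) = g (seq k).1 := by
    intro k
    show f (seq (k+1)).1 = g (seq k).1
    rw [hseqsucc]; exact hΦ (seq k)
  have hβne : ∀ k, β (k+1) ≠ β k := by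
    intro k h
    rw [hβsucc] at h
    exact (seq k).2.2.2 h.symm
  -- pigeonhole
  have hpigeon : ∃ l, ∃ s, s < l ∧ β s = β l := by
    obtain ⟨a, a', hne, heq⟩ := Fintype.exists_ne_map_eq_of_card_lt
      (fun m : Fin (d+1) => β m) (by simp)
    rcases lt_or_gt_of_ne (fun h => hne (Fin.ext h) : (a:ℕ) ≠ (a':ℕ)) with h | h
    · exact ⟨a', a, h, heq⟩
    · exact ⟨a, a', h, heq.symm⟩
  classical
  let l0 := Nat.find hpigeon
  obtain ⟨k0, hk0lt, hk0eq⟩ : ∃ s, s < l0 ∧ β s = β l0 := Nat.find_spec hpigeon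
  have hmin : ∀ m, m < l0 → ¬ ∃ s, s < m ∧ β s = β m := fun m hm => Nat.find_min hpigeon hm
  set r := l0 - k0 with hrdef
  have hr1 : 1 ≤ r := by omega
  have hr2 : 2 ≤ r := by
    by_contra h
    have : r = 1 := by omega
    have : l0 = k0 + 1 := by omega
    rw [this] at hk0eq
    exact hβne k0 hk0eq.symm
  -- apply lemW
  refine lemW S T hpos hsec u hu c c' r hr2
    (fun t => (seq (k0 + (t-1))).1) (fun t => β (k0 + (t-1)))
    (fun t _ _ => (seq (k0 + (t-1))).2.1)
    ?_ ?_ ?_ (fun t _ _ => rfl) ?_ ?_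
  · -- distinct colors
    intro s t hs1 hst htr heq
    have h1 : k0 + (s-1) < k0 + (t-1) := by omega
    have h2 : k0 + (t-1) < l0 := by omega
    exact hmin (k0 + (t-1)) h2 ⟨k0 + (s-1), h1, heq⟩
  · -- ≠ c
    intro t ht1 htr
    exact ((seq (k0 + (t-1))).2.2.2 |> fun h => (hD _ (seq _).2.1 (seq _).2.2.1 h).1)
  · -- ≠ c'
    intro t ht1 htr
    exact ((seq (k0 + (t-1))).2.2.2 |> fun h => (hD _ (seq _).2.1 (seq _).2.2.1 h).2.1)
  · -- hg
    intro t ht1 htr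
    show T (u + unitVec c') (seq (k0 + (t-1))).1 = β (k0 + (t+1-1))
    have h3 : k0 + (t + 1 - 1) = (k0 + (t-1)) + 1 := by omega
    rw [h3, hβsucc]
  · -- hgr
    show T (u + unitVec c') (seq (k0 + (r-1))).1 = β (k0 + (1-1))
    have h2 : k0 + (1 - 1) = k0 := by omega
    have h1 : l0 = k0 + (r - 1) + 1 := by omega
    rw [h2, hk0eq, h1, hβsucc]

lemma main_abstract {n d : ℕ} (N : ℕ) :
    ∀ (S : Finset (Fin n)) (_ : S.card = N)
    (T : (Fin d → ℕ) → Fin n → Fin d)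
    (_ : ∀ v : Fin d → ℕ, (∑ j, v j) = N → ∀ a, (fibS S (T v) a).card = v a)
    (_ : ∀ (u : Fin d → ℕ) (j j' : Fin d), (∑ k, u k) + 1 = N →
      ∀ i ∈ S, T (u + unitVec j') i = j → T (u + unitVec j) i = j)
    (v v' : Fin d → ℕ) (_ : (∑ j, v j) = N) (_ : (∑ j, v' j) = N)
    (I : Finset (Fin n)) (J : Finset (Fin d)) (_ : I ⊆ S)
    (_ : ∀ i ∈ I, T v i ∈ J) (_ : ∀ i ∈ I, T v' i ∈ J)
    (_ : ∀ i ∈ I, ∀ i' ∈ I, T v i = T v i' → i = i')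
    (_ : ∀ i ∈ I, ∀ i' ∈ I, T v' i = T v' i' → i = i')
    (_ : ∀ j ∈ J, ∃ i ∈ I, T v i = j) (_ : ∀ j ∈ J, ∃ i ∈ I, T v' i = j),
    ∀ i ∈ I, T v i = T v' i := by
  induction N using Nat.strong_induction_on with
  | _ N IH =>
  intro S hS T hpos hsec v v' hv hv' I J hIS hfJ hgJ hfinj hginj hfsur hgsur
  rcases I.eq_empty_or_nonempty with hIe | ⟨i1, hi1⟩
  · intro i hi; rw [hIe] at hi; exact absurd hi (Finset.notMem_empty i)
  by_cases hSI : S ⊆ I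
  · -- I = S forces v = v'
    have hI : I = S := Finset.Subset.antisymm hIS hSI
    have count : ∀ (w : Fin d → ℕ), (∑ j, w j) = N → (∀ i ∈ I, T w i ∈ J) →
        (∀ i ∈ I, ∀ i' ∈ I, T w i = T w i' → i = i') → (∀ j ∈ J, ∃ i ∈ I, T w i = j) →
        ∀ a, w a = if a ∈ J then 1 else 0 := by
      intro w hw hwJ hwinj hwsur a
      rw [← hpos w hw a]
      by_cases haJ : a ∈ J
      · obtain ⟨i0, hi0I, hi0⟩ := hwsur a haJ
        have : fibS S (T w) a = {i0} := by
          ext z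
          rw [mem_fibS, Finset.mem_singleton]
          constructor
          · rintro ⟨hzS, hzc⟩
            exact hwinj z (hI ▸ hzS) i0 hi0I (by rw [hzc, hi0])
          · rintro rfl
            exact ⟨hIS hi0I, hi0⟩
        rw [this, if_pos haJ, Finset.card_singleton]
      · have : fibS S (T w) a = ∅ := by
          rw [Finset.eq_empty_iff_forall_notMem]
          rintro z hz
          obtain ⟨hzS, hzc⟩ := mem_fibS.mp hz
          exact haJ (hzc ▸ hwJ z (hI ▸ hzS))
        rw [this, if_neg haJ, Finset.card_empty]
    have hvv : v = v' := by
      funext a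
      rw [count v hv hfJ hfinj hfsur a, count v' hv' hgJ hginj hgsur a]
    intro i _
    rw [hvv]
  · -- there is istar ∈ S \ I : delete it
    obtain ⟨istar, hstS, hstI⟩ := Finset.not_subset.mp hSI
    have hN1 : 1 ≤ N := hS ▸ Finset.card_pos.mpr ⟨istar, hstS⟩
    set j0 : Fin d := T v i1 with hj0
    set cfix : (Fin d → ℕ) → Fin d :=
      fun u => T (u + unitVec j0) istar with hcfixdef
    have hcfix : ∀ u : Fin d → ℕ, (∑ k, u k) + 1 = N →
        T (u + unitVec (cfix u)) istar = cfix u := by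
      intro u hu
      exact hsec u (cfix u) j0 hu istar hstS rfl
    set T' : (Fin d → ℕ) → Fin n → Fin d :=
      fun u => if h : (∑ k, u k) + 1 = N then T (u + unitVec (cfix u)) else T u with hT'def
    have hT' : ∀ u : Fin d → ℕ, (∑ k, u k) + 1 = N →
        T' u = T (u + unitVec (cfix u)) := fun u hu => dif_pos hu
    set S' := S.erase istar with hS'def
    have hS' : S'.card + 1 = N := by
      rw [hS'def, Finset.card_erase_of_mem hstS]
      omega
    have hfib' : ∀ (X : Fin n → Fin d) (a : Fin d),
        fibS S' X a = (fibS S X a).erase istar := by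
      intro X a
      ext z
      simp only [fibS, hS'def, Finset.mem_filter, Finset.mem_erase]
      tauto
    have hCU := claimU (N := N) S T hpos hsec
    -- positions of T' over S'
    have hpos' : ∀ u : Fin d → ℕ, (∑ j, u j) = S'.card →
        ∀ a, (fibS S' (T' u) a).card = u a := by
      intro u hu a
      have hlev : (∑ k, u k) + 1 = N := by omega
      rw [hT' u hlev, hfib']
      have hcards : (fibS S (T (u + unitVec (cfix u))) a).card
          = u a + (if a = cfix u then 1 else 0) := by
        have h1 := hpos (u + unitVec (cfix u)) (by rw [sum_add_unitVec]; exact hlev) a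
        rw [h1]; rfl
      by_cases hac : a = cfix u
      · have hmem : istar ∈ fibS S (T (u + unitVec (cfix u))) a :=
          mem_fibS.mpr ⟨hstS, by rw [hcfix u hlev, hac]⟩
        rw [Finset.card_erase_of_mem hmem, hcards, if_pos hac]
        omega
      · have hmem : istar ∉ fibS S (T (u + unitVec (cfix u))) a := by
          intro hmem
          exact hac (by rw [← (mem_fibS.mp hmem).2, hcfix u hlev])
        rw [Finset.erase_eq_of_notMem hmem, hcards, if_neg hac]
        omega
    -- sector axiom for T' over S'
    have hsec' : ∀ (u' : Fin d → ℕ) (j j' : Fin d), (∑ k, u' k) + 1 = S'.card →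
        ∀ i ∈ S', T' (u' + unitVec j') i = j → T' (u' + unitVec j) i = j := by
      intro u' j j' hu' i hiS' hyp
      obtain ⟨hine, hiS2⟩ := Finset.mem_erase.mp (hS'def ▸ hiS')
      have hub : (∑ k, (u' + unitVec j') k) + 1 = N := by rw [sum_add_unitVec]; omega
      have hw : (∑ k, (u' + unitVec j) k) + 1 = N := by rw [sum_add_unitVec]; omega
      rw [hT' _ hub] at hyp
      rw [hT' _ hw]
      set ub := u' + unitVec j' with hubdef
      set w := u' + unitVec j with hwdef
      set z : Fin d := T (ub + unitVec j) istar with hzdef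
      have hza : T (ub + unitVec z) istar = z := hsec ub z j hub istar hstS rfl
      -- (b) transfer hyp to the z-tope at base ub
      have hb : T (ub + unitVec z) i = j := by
        rw [hCU ub hub istar hstS z (cfix ub) hza (hcfix ub hub) i hiS2 hine]
        exact hyp
      -- (c) sector at base u' + unitVec z
      have hcomm1 : ub + unitVec z = (u' + unitVec z) + unitVec j' := by
        rw [hubdef]; exact add_right_comm u' (unitVec j') (unitVec z)
      have hcomm2 : w + unitVec z = (u' + unitVec z) + unitVec j := by
        rw [hwdef]; exact add_right_comm u' (unitVec j) (unitVec z)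
      have hlevz : (∑ k, (u' + unitVec z) k) + 1 = N := by rw [sum_add_unitVec]; omega
      have hc2 : T (w + unitVec z) i = j := by
        rw [hcomm2]
        exact hsec (u' + unitVec z) j j' hlevz i hiS2 (by rw [← hcomm1]; exact hb)
      -- (d) z is fixed at w
      have hcomm3 : ub + unitVec j = w + unitVec j' := by
        rw [hubdef, hwdef]; exact add_right_comm u' (unitVec j') (unitVec j)
      have hzd : T (w + unitVec z) istar = z :=
        hsec w z j' hw istar hstS (by rw [← hcomm3, ← hzdef])
      -- (e) transfer to the canonical tope at w
      rw [hCU w hw istar hstS z (cfix w) hzd (hcfix w hw) i hiS2 hine] at hc2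
      exact hc2

    -- bar positions
    set c := T v istar with hcdef
    set c' := T v' istar with hc'def
    have hvc : 1 ≤ v c := by
      rw [← hpos v hv c]
      exact Finset.card_pos.mpr ⟨istar, mem_fibS.mpr ⟨hstS, rfl⟩⟩
    have hvc' : 1 ≤ v' c' := by
      rw [← hpos v' hv' c']
      exact Finset.card_pos.mpr ⟨istar, mem_fibS.mpr ⟨hstS, rfl⟩⟩
    set vb : Fin d → ℕ := fun a => if a = c then v c - 1 else v a with hvbdef
    set vb' : Fin d → ℕ := fun a => if a = c' then v' c' - 1 else v' a with hvb'def
    have hvbeq : v = vb + unitVec c := by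
      funext a
      show v a = vb a + unitVec c a
      by_cases hac : a = c
      · subst hac; simp [hvbdef, unitVec]; omega
      · simp [hvbdef, unitVec, hac]
    have hvb'eq : v' = vb' + unitVec c' := by
      funext a
      show v' a = vb' a + unitVec c' a
      by_cases hac : a = c'
      · subst hac; simp [hvb'def, unitVec]; omega
      · simp [hvb'def, unitVec, hac]
    have hvbsum : (∑ j, vb j) = S'.card := by
      have : (∑ k, (vb + unitVec c) k) = N := by rw [← hvbeq]; exact hv
      rw [sum_add_unitVec] at this
      omega
    have hvb'sum : (∑ j, vb' j) = S'.card := by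
      have : (∑ k, (vb' + unitVec c') k) = N := by rw [← hvb'eq]; exact hv'
      rw [sum_add_unitVec] at this
      omega
    have hvblev : (∑ k, vb k) + 1 = N := by omega
    have hvb'lev : (∑ k, vb' k) + 1 = N := by omega
    -- agreement on I
    have hagree : ∀ i ∈ I, T' vb i = T v i := by
      intro i hi
      have hiS2 : i ∈ S := hIS hi
      have hine : i ≠ istar := fun h => hstI (h ▸ hi)
      rw [hT' vb hvblev]
      have hcf : T (vb + unitVec c) istar = c := by rw [← hvbeq]
      have := hCU vb hvblev istar hstS (cfix vb) c (hcfix vb hvblev) hcf i hiS2 hine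
      rw [this, ← hvbeq]
    have hagree' : ∀ i ∈ I, T' vb' i = T v' i := by
      intro i hi
      have hiS2 : i ∈ S := hIS hi
      have hine : i ≠ istar := fun h => hstI (h ▸ hi)
      rw [hT' vb' hvb'lev]
      have hcf : T (vb' + unitVec c') istar = c' := by rw [← hvb'eq]
      have := hCU vb' hvb'lev istar hstS (cfix vb') c' (hcfix vb' hvb'lev) hcf i hiS2 hine
      rw [this, ← hvb'eq]
    have hIS' : I ⊆ S' := by
      intro i hi
      rw [hS'def]
      exact Finset.mem_erase.mpr ⟨fun h => hstI (h ▸ hi), hIS hi⟩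
    have hres := IH S'.card (by omega) S' rfl T' hpos' hsec' vb vb' hvbsum hvb'sum I J hIS'
      (fun i hi => by rw [hagree i hi]; exact hfJ i hi)
      (fun i hi => by rw [hagree' i hi]; exact hgJ i hi)
      (fun i hi i' hi' h => hfinj i hi i' hi' (by rw [← hagree i hi, ← hagree i' hi']; exact h))
      (fun i hi i' hi' h => hginj i hi i' hi' (by rw [← hagree' i hi, ← hagree' i' hi']; exact h))
      (fun j hj => let ⟨i, hi, h⟩ := hfsur j hj; ⟨i, hi, by rw [hagree i hi]; exact h⟩)
      (fun j hj => let ⟨i, hi, h⟩ := hgsur j hj; ⟨i, hi, by rw [hagree' i hi]; exact h⟩)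
    intro i hi
    rw [← hagree i hi, ← hagree' i hi]
    exact hres i hi

end Aux

theorem statement1 {n d : ℕ} (T : (Fin d → ℕ) → Fin n → Fin d)
    (hpos : ∀ v : Fin d → ℕ, (∑ j, v j) = n → topePos (T v) = v)
    (hsector : ∀ (u : Fin d → ℕ) (j j' : Fin d), (∑ k, u k) + 1 = n →
      ∀ i, T (u + unitVec j') i = j → T (u + unitVec j) i = j) :
    ∀ v v' : Fin d → ℕ, (∑ j, v j) = n → (∑ j, v' j) = n →
      Compatible (topeGraph (T v)) (topeGraph (T v')) := by
  have memtope : ∀ (f : Fin n → Fin d) (e : Fin n × Fin d),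
      e ∈ topeGraph f ↔ e.2 = f e.1 := by
    intro f e
    constructor
    · intro he
      obtain ⟨i, _, hi⟩ := Finset.mem_image.mp he
      rw [← hi]
    · intro he
      refine Finset.mem_image.mpr ⟨e.1, Finset.mem_univ _, ?_⟩
      rw [← he]
  intro v v' hv hv' I J M M' hMG hM'G hM hM'
  obtain ⟨hMIJ, hMl, hMr⟩ := hM
  obtain ⟨hM'IJ, hM'l, hM'r⟩ := hM'
  have hMchar : ∀ a ∈ I, (a, T v a) ∈ M := by
    intro a ha
    obtain ⟨b, hb, _⟩ := hMl a ha
    have h2 := (memtope (T v) (a, b)).mp (hMG hb)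
    rw [← h2]
    exact hb
  have hM'char : ∀ a ∈ I, (a, T v' a) ∈ M' := by
    intro a ha
    obtain ⟨b, hb, _⟩ := hM'l a ha
    have h2 := (memtope (T v') (a, b)).mp (hM'G hb)
    rw [← h2]
    exact hb
  have hMeq : M = I.image (fun i => (i, T v i)) := by
    ext e
    constructor
    · intro he
      refine Finset.mem_image.mpr ⟨e.1, (hMIJ e he).1, ?_⟩
      have h2 := (memtope (T v) e).mp (hMG he)
      exact Prod.ext rfl h2.symm
    · intro he
      obtain ⟨i, hi, hie⟩ := Finset.mem_image.mp he
      rw [← hie]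
      exact hMchar i hi
  have hM'eq : M' = I.image (fun i => (i, T v' i)) := by
    ext e
    constructor
    · intro he
      refine Finset.mem_image.mpr ⟨e.1, (hM'IJ e he).1, ?_⟩
      have h2 := (memtope (T v') e).mp (hM'G he)
      exact Prod.ext rfl h2.symm
    · intro he
      obtain ⟨i, hi, hie⟩ := Finset.mem_image.mp he
      rw [← hie]
      exact hM'char i hi
  have hmain := main_abstract (n := n) (d := d) n Finset.univ (by simp) T
    (fun w hw a => by
      have := congrFun (hpos w hw) a
      exact this)
    (fun u j j' hu i _ h => hsector u j j' hu i h)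
    v v' hv hv' I J (Finset.subset_univ I)
    (fun i hi => (hMIJ _ (hMchar i hi)).2)
    (fun i hi => (hM'IJ _ (hM'char i hi)).2)
    (fun i hi i' hi' h => by
      have hJ : T v i ∈ J := (hMIJ _ (hMchar i hi)).2
      obtain ⟨a, _, hau⟩ := hMr (T v i) hJ
      rw [hau i (hMchar i hi), hau i' (by rw [h]; exact hMchar i' hi')])
    (fun i hi i' hi' h => by
      have hJ : T v' i ∈ J := (hM'IJ _ (hM'char i hi)).2
      obtain ⟨a, _, hau⟩ := hM'r (T v' i) hJ
      rw [hau i (hM'char i hi), hau i' (by rw [h]; exact hM'char i' hi')])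
    (fun j hj => by
      obtain ⟨a, ha, _⟩ := hMr j hj
      have haI : a ∈ I := (hMIJ _ ha).1
      have : j = T v a := (memtope (T v) (a, j)).mp (hMG ha)
      exact ⟨a, haI, this.symm⟩)
    (fun j hj => by
      obtain ⟨a, ha, _⟩ := hM'r j hj
      have haI : a ∈ I := (hM'IJ _ ha).1
      have : j = T v' a := (memtope (T v') (a, j)).mp (hM'G ha)
      exact ⟨a, haI, this.symm⟩)
  rw [hMeq, hM'eq]
  apply Finset.image_congr
  intro x hx
  exact Prod.ext rfl (hmain x hx)
end

section
/- The reduction of every linkage pointed (n+d,d)-matching field is an (n,d)-matching left-semi-ensemble, and reduction is a bijection from the set of linkage pointed (n+d,d)-matching fields to the set of (n,d)-matching left-semi-ensembles. -/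
open Finset

/-- A linkage pointed `(n+d, d)`-matching field (normalized). -/
structure PointedMF (n d : ℕ) where
  M : Finset (Fin n ⊕ Fin d) → BGraph (Fin n ⊕ Fin d) (Fin d)
  matching : ∀ σ, σ.card = d → IsMatching (M σ) σ Finset.univ
  junk : ∀ σ, σ.card ≠ d → M σ = ∅
  pointed : ∀ σ, σ.card = d → ∀ j : Fin d, Sum.inr j ∈ σ → (Sum.inr j, j) ∈ M σ
  linkage : ∀ τ : Finset (Fin n ⊕ Fin d), τ.card = d + 1 →
    IsTreeOn (τ.biUnion fun x => M (τ.erase x)) τ Finset.univ ∧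
      ∀ j : Fin d, RD (τ.biUnion fun x => M (τ.erase x)) j = 2

/-- An `(n,d)`-matching left-semi-ensemble (normalized). -/
structure LeftSemiEnsemble (n d : ℕ) where
  M : Finset (Fin n) → Finset (Fin d) → BGraph (Fin n) (Fin d)
  matching : ∀ I J, I.card = J.card → IsMatching (M I J) I J
  junk : ∀ I J, I.card ≠ J.card → M I J = ∅
  closure : ∀ (I : Finset (Fin n)) (J : Finset (Fin d)) (I' : Finset (Fin n))
    (J' : Finset (Fin d)) (N : BGraph (Fin n) (Fin d)), I.card = J.card → I' ⊆ I → J' ⊆ J →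
    N ⊆ M I J → IsMatching N I' J' → N = M I' J'
  leftLinkage : ∀ (I : Finset (Fin n)) (J : Finset (Fin d)), I.card = J.card + 1 →
    IsTreeOn (I.biUnion fun i => M (I.erase i) J) I J ∧
      ∀ j ∈ J, RD (I.biUnion fun i => M (I.erase i) J) j = 2

/-- The index set `σ = I ∪ {j̲ : j̄ ∉ J}` used in the reduction. -/
def reduceSigma {n d : ℕ} (I : Finset (Fin n)) (J : Finset (Fin d)) :
    Finset (Fin n ⊕ Fin d) :=
  I.image Sum.inl ∪ Jᶜ.image Sum.inr

set_option maxHeartbeats 1000000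


namespace MFRed
set_option linter.unusedSectionVars false

open SimpleGraph Walk

variable {V : Type*} [DecidableEq V] {G G' : SimpleGraph V}

/-- A vertex on a cycle has two distinct neighbors. -/
lemma cycle_two_nbrs {v : V} (c : G.Walk v v) (hc : c.IsCycle) :
    ∃ x y, G.Adj v x ∧ G.Adj v y ∧ x ≠ y := by
  cases c with
  | nil => exact absurd hc (IsCycle.not_of_nil)
  | @cons _ z _ h q =>
    rw [Walk.cons_isCycle_iff] at hc
    obtain ⟨hq, he⟩ := hc
    cases hqr : q.reverse with
    | nil =>
      exfalso
      have : q = Walk.nil.reverse := by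
        rw [← hqr, Walk.reverse_reverse]
      rw [Walk.reverse_nil] at this
      subst this
      exact G.loopless.irrefl _ h
    | @cons _ y _ h' q' =>
      refine ⟨z, y, h, h', ?_⟩
      rintro rfl
      apply he
      have : s(v, z) ∈ q.reverse.edges := by
        rw [hqr, Walk.edges_cons]
        exact List.mem_cons_self
      rwa [Walk.edges_reverse, List.mem_reverse] at this

/-- Every vertex on a walk is the endpoint or has a neighbor. -/
lemma support_has_nbr : ∀ {x y : V} (p : G.Walk x y) (v : V), v ∈ p.support →
    v = y ∨ ∃ w, G.Adj v w := by
  intro x y p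
  induction p with
  | nil => intro v hv; left; simpa using hv
  | @cons a b c h q ih =>
    intro v hv
    rw [Walk.support_cons, List.mem_cons] at hv
    rcases hv with rfl | hv
    · exact Or.inr ⟨b, h⟩
    · exact ih v hv

section Leaf

variable {v w : V}

/-- Adding a pendant edge `v-w` (with `v` isolated in `G`) preserves acyclicity. -/
lemma leaf_acyclic (hle : G ≤ G')
    (hnew : ∀ x y, G'.Adj x y → G.Adj x y ∨ (x = v ∧ y = w) ∨ (x = w ∧ y = v))
    (hv : ∀ z, ¬ G.Adj v z) (hG : G.IsAcyclic) : G'.IsAcyclic := by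
  intro u c hc
  by_cases hvs : v ∈ c.support
  · obtain ⟨x, y, hx, hy, hxy⟩ := cycle_two_nbrs (c.rotate v hvs) (hc.rotate hvs)
    have hxw : x = w := by
      rcases hnew v x hx with h | ⟨h1, h2⟩ | ⟨h1, h2⟩
      · exact absurd h (hv x)
      · exact h2
      · exact absurd (h2 ▸ hx) (G'.loopless.irrefl v)
    have hyw : y = w := by
      rcases hnew v y hy with h | ⟨h1, h2⟩ | ⟨h1, h2⟩
      · exact absurd h (hv y)
      · exact h2
      · exact absurd (h2 ▸ hy) (G'.loopless.irrefl v)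
    exact hxy (hxw.trans hyw.symm)
  · have hedges : ∀ e ∈ c.edges, e ∈ G.edgeSet := by
      intro e he
      induction e with
      | _ a b =>
        have hadj : G'.Adj a b := c.adj_of_mem_edges he
        have ha : a ∈ c.support := c.fst_mem_support_of_mem_edges he
        have hb : b ∈ c.support := c.snd_mem_support_of_mem_edges he
        rcases hnew a b hadj with h | ⟨rfl, rfl⟩ | ⟨rfl, rfl⟩
        · exact h
        · exact absurd ha hvs
        · exact absurd hb hvs
    exact hG (c.transfer G hedges) (hc.transfer hedges)

/-- Reachability descends when we delete a pendant vertex. -/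
lemma leaf_reach (hnew : ∀ x y, G'.Adj x y → G.Adj x y ∨ (x = v ∧ y = w) ∨ (x = w ∧ y = v))
    (hv : ∀ z, ¬ G.Adj v z) {x y : V} (hr : G'.Reachable x y)
    (hx : x ≠ v) (hy : y ≠ v) : G.Reachable x y := by
  obtain ⟨p⟩ := hr
  suffices H : ∀ (k : ℕ) (x y : V) (p : G'.Walk x y), p.length ≤ k → x ≠ v → y ≠ v →
      G.Reachable x y by
    exact H p.length x y p le_rfl hx hy
  clear hx hy p x y
  intro k
  induction k with
  | zero =>
    intro x y p hl _ _
    cases p with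
    | nil => exact Reachable.refl x
    | cons h q => simp at hl
  | succ k ih =>
    intro x y p hl hx hy
    cases p with
    | nil => exact Reachable.refl x
    | @cons _ z _ h q =>
      by_cases hz : z = v
      · have hxw : x = w := by
          rcases hnew x z h with h' | ⟨h1, h2⟩ | ⟨h1, h2⟩
          · rw [hz] at h'; exact absurd h'.symm (hv x)
          · exact absurd h1 hx
          · exact h1
        cases q with
        | nil => exact absurd hz hy
        | @cons _ z' _ h' q' =>
          have hz'w : z' = w := by
            rcases hnew z z' h' with h'' | ⟨h1, h2⟩ | ⟨h1, h2⟩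
            · rw [hz] at h''; exact absurd h'' (hv z')
            · exact h2
            · rw [h2, ← hz] at h'; exact absurd h' (G'.loopless.irrefl z)
          have hwv : w ≠ v := by
            intro hwv
            rw [hz'w, hwv, ← hz] at h'
            exact G'.loopless.irrefl z h'
          have hq'len : q'.length ≤ k := by
            simp only [Walk.length_cons] at hl
            omega
          have hr := ih z' y q' hq'len (by rw [hz'w]; exact hwv) hy
          rw [hxw, ← hz'w]
          exact hr
      · have hadj : G.Adj x z := by
          rcases hnew x z h with h' | ⟨rfl, rfl⟩ | ⟨rfl, rfl⟩
          · exact h'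
          · exact absurd rfl hx
          · exact absurd rfl hz
        refine hadj.reachable.trans (ih z y q ?_ hz hy)
        simpa using hl
end Leaf

/-- In an acyclic graph in which every non-isolated vertex has two distinct
neighbors, there are no edges at all. -/
lemma acyclic_no_branching [Fintype V] {G : SimpleGraph V} (hA : G.IsAcyclic)
    (h2 : ∀ z z', G.Adj z z' → ∃ w₁ w₂, G.Adj z w₁ ∧ G.Adj z w₂ ∧ w₁ ≠ w₂) :
    ∀ z z', ¬ G.Adj z z' := by
  intro z₀ z₀' hadj
  have key : ∀ k : ℕ, ∃ (x y : V) (p : G.Walk x y), p.IsPath ∧ p.length = k + 1 := by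
    intro k
    induction k with
    | zero =>
      refine ⟨z₀, z₀', Walk.cons hadj Walk.nil, ?_, rfl⟩
      rw [Walk.cons_isPath_iff]
      exact ⟨Walk.IsPath.nil, by simpa using hadj.ne⟩
    | succ k ih =>
      obtain ⟨x, y, p, hp, hlen⟩ := ih
      cases p with
      | nil => simp at hlen
      | @cons _ m _ h q =>
        obtain ⟨w₁, w₂, hw₁, hw₂, hne⟩ := h2 x m h
        have hpick : ∃ w, G.Adj x w ∧ w ≠ m := by
          rcases eq_or_ne w₁ m with rfl | hne1
          · exact ⟨w₂, hw₂, hne.symm⟩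
          · exact ⟨w₁, hw₁, hne1⟩
        obtain ⟨ww, hww, hwm⟩ := hpick
        by_cases hws : ww ∈ (Walk.cons h q).support
        · exfalso
          -- the unique path from x to ww must be the single edge
          have htake := hp.takeUntil hws
          have hedge : (Walk.cons hww Walk.nil : G.Walk x ww).IsPath := by
            rw [Walk.cons_isPath_iff]
            exact ⟨Walk.IsPath.nil, by simpa using hww.ne⟩
          have := hA.path_unique ⟨(Walk.cons h q).takeUntil ww hws, htake⟩ ⟨Walk.cons hww Walk.nil, hedge⟩
          have heq : (Walk.cons h q).takeUntil ww hws = Walk.cons hww Walk.nil :=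
            congrArg Subtype.val this
          have hspec := (Walk.cons h q).take_spec hws
          rw [heq] at hspec
          -- hspec : cons hww (nil.append (dropUntil ...)) = cons h q
          rw [Walk.cons_append] at hspec
          have h5 := congrArg (fun r : G.Walk x y => r.getVert 1) hspec
          simp only [Walk.getVert_cons_succ, Walk.getVert_zero] at h5
          exact hwm h5
        · refine ⟨ww, y, Walk.cons hww.symm (Walk.cons h q), ?_, by simp [hlen]⟩
          rw [Walk.cons_isPath_iff]
          exact ⟨hp, hws⟩
  obtain ⟨x, y, p, hp, hlen⟩ := key (Fintype.card V)
  have := hp.length_lt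
  omega



section ToGraphUtil

variable {α β : Type*} [DecidableEq α] [DecidableEq β]

lemma toGraph_adj {G : BGraph α β} {x y : α ⊕ β} :
    (toGraph G).Adj x y ↔ ∃ a b, (a, b) ∈ G ∧
      ((x = Sum.inl a ∧ y = Sum.inr b) ∨ (x = Sum.inr b ∧ y = Sum.inl a)) := by
  rw [toGraph, SimpleGraph.fromRel_adj]
  constructor
  · rintro ⟨hne, (⟨a, b, rfl, rfl, hm⟩ | ⟨a, b, rfl, rfl, hm⟩)⟩
    · exact ⟨a, b, hm, Or.inl ⟨rfl, rfl⟩⟩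
    · exact ⟨a, b, hm, Or.inr ⟨rfl, rfl⟩⟩
  · rintro ⟨a, b, hm, (⟨rfl, rfl⟩ | ⟨rfl, rfl⟩)⟩
    · exact ⟨by simp, Or.inl ⟨a, b, rfl, rfl, hm⟩⟩
    · exact ⟨by simp, Or.inr ⟨a, b, rfl, rfl, hm⟩⟩

lemma toGraph_mono {G G' : BGraph α β} (h : G ⊆ G') : toGraph G ≤ toGraph G' := by
  intro x y hxy
  rw [toGraph_adj] at hxy ⊢
  obtain ⟨a, b, hm, ho⟩ := hxy
  exact ⟨a, b, h hm, ho⟩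

lemma acyclic_mono {G G' : BGraph α β} (h : G ⊆ G') (hA : Acyclic G') : Acyclic G := by
  intro u c hc
  exact hA (c.mapLe (toGraph_mono h)) (hc.mapLe _)

lemma RD_insert {G : BGraph α β} {e : α × β} (he : e ∉ G) (j : β) :
    RD (insert e G) j = RD G j + (if e.2 = j then 1 else 0) := by
  unfold RD
  rw [Finset.filter_insert]
  split_ifs with h
  · rw [Finset.card_insert_of_notMem (fun hc => he (Finset.mem_filter.1 hc).1)]
  · rfl

lemma RD_zero {G : BGraph α β} {J : Finset β} (hG : ∀ e ∈ G, e.2 ∈ J) {b : β} (hb : b ∉ J) :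
    RD G b = 0 := by
  unfold RD
  rw [Finset.card_eq_zero, Finset.filter_eq_empty_iff]
  exact fun e he heq => hb (heq ▸ hG e he)

lemma isTreeOn_insert_right {U : BGraph α β} {I : Finset α} {J : Finset β} {a : α} {b : β}
    (hU : ∀ e ∈ U, e.1 ∈ I ∧ e.2 ∈ J) (ha : a ∈ I) (hb : b ∉ J) :
    IsTreeOn (insert (a, b) U) I (insert b J) ↔ IsTreeOn U I J := by
  have hle : toGraph U ≤ toGraph (insert (a,b) U) := toGraph_mono (Finset.subset_insert _ _)
  have hvw : (toGraph (insert (a,b) U)).Adj (Sum.inr b) (Sum.inl a) :=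
    toGraph_adj.2 ⟨a, b, Finset.mem_insert_self _ _, Or.inr ⟨rfl, rfl⟩⟩
  have hnew : ∀ x y, (toGraph (insert (a,b) U)).Adj x y →
      (toGraph U).Adj x y ∨ (x = Sum.inr b ∧ y = Sum.inl a) ∨
        (x = Sum.inl a ∧ y = Sum.inr b) := by
    intro x y hxy
    rw [toGraph_adj] at hxy
    obtain ⟨a', b', hm, ho⟩ := hxy
    rcases Finset.mem_insert.1 hm with heq | hm'
    · rw [Prod.mk.injEq] at heq
      obtain ⟨rfl, rfl⟩ := heq
      rcases ho with ⟨rfl, rfl⟩ | ⟨rfl, rfl⟩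
      · exact Or.inr (Or.inr ⟨rfl, rfl⟩)
      · exact Or.inr (Or.inl ⟨rfl, rfl⟩)
    · exact Or.inl (toGraph_adj.2 ⟨a', b', hm', ho⟩)
  have hv : ∀ z, ¬ (toGraph U).Adj (Sum.inr b) z := by
    intro z hz
    rw [toGraph_adj] at hz
    obtain ⟨a', b', hm, ho⟩ := hz
    rcases ho with ⟨h1, _⟩ | ⟨h1, _⟩
    · exact Sum.inr_ne_inl h1
    · rw [Sum.inr.injEq] at h1
      exact hb (h1 ▸ (hU _ hm).2)
  constructor
  · rintro ⟨_, hacyc, hreach⟩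
    refine ⟨hU, acyclic_mono (Finset.subset_insert _ _) hacyc, ?_⟩
    intro x y hx hy
    have hx' : Sum.elim (· ∈ I) (· ∈ insert b J) x := by
      cases x with
      | inl i => exact hx
      | inr j => exact Finset.mem_insert_of_mem hx
    have hy' : Sum.elim (· ∈ I) (· ∈ insert b J) y := by
      cases y with
      | inl i => exact hy
      | inr j => exact Finset.mem_insert_of_mem hy
    refine leaf_reach hnew hv (hreach x y hx' hy') ?_ ?_
    · intro h; subst h; exact hb hx
    · intro h; subst h; exact hb hy
  · rintro ⟨_, hacyc, hreach⟩
    refine ⟨?_, leaf_acyclic hle hnew hv hacyc, ?_⟩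
    · intro e he
      rcases Finset.mem_insert.1 he with rfl | he'
      · exact ⟨ha, Finset.mem_insert_self _ _⟩
      · exact ⟨(hU e he').1, Finset.mem_insert_of_mem (hU e he').2⟩
    · intro x y hx hy
      have step : ∀ z, Sum.elim (· ∈ I) (· ∈ insert b J) z →
          ∃ z', Sum.elim (· ∈ I) (· ∈ J) z' ∧ (toGraph (insert (a,b) U)).Reachable z z' := by
        intro z hz
        cases z with
        | inl i => exact ⟨Sum.inl i, hz, SimpleGraph.Reachable.refl _⟩
        | inr j =>
          rcases Finset.mem_insert.1 hz with rfl | hj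
          · exact ⟨Sum.inl a, ha, hvw.reachable⟩
          · exact ⟨Sum.inr j, hj, SimpleGraph.Reachable.refl _⟩
      obtain ⟨x', hx', rx⟩ := step x hx
      obtain ⟨y', hy', ry⟩ := step y hy
      exact rx.trans (((hreach x' y' hx' hy').mono hle).trans ry.symm)

lemma isTreeOn_insert_left {U : BGraph α β} {I : Finset α} {J : Finset β} {p : α} {b : β}
    (hU : ∀ e ∈ U, e.1 ∈ I ∧ e.2 ∈ J) (hp : p ∉ I) (hb : b ∈ J) :
    IsTreeOn (insert (p, b) U) (insert p I) J ↔ IsTreeOn U I J := by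
  have hle : toGraph U ≤ toGraph (insert (p,b) U) := toGraph_mono (Finset.subset_insert _ _)
  have hvw : (toGraph (insert (p,b) U)).Adj (Sum.inl p) (Sum.inr b) :=
    toGraph_adj.2 ⟨p, b, Finset.mem_insert_self _ _, Or.inl ⟨rfl, rfl⟩⟩
  have hnew : ∀ x y, (toGraph (insert (p,b) U)).Adj x y →
      (toGraph U).Adj x y ∨ (x = Sum.inl p ∧ y = Sum.inr b) ∨
        (x = Sum.inr b ∧ y = Sum.inl p) := by
    intro x y hxy
    rw [toGraph_adj] at hxy
    obtain ⟨a', b', hm, ho⟩ := hxy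
    rcases Finset.mem_insert.1 hm with heq | hm'
    · rw [Prod.mk.injEq] at heq
      obtain ⟨rfl, rfl⟩ := heq
      rcases ho with ⟨rfl, rfl⟩ | ⟨rfl, rfl⟩
      · exact Or.inr (Or.inl ⟨rfl, rfl⟩)
      · exact Or.inr (Or.inr ⟨rfl, rfl⟩)
    · exact Or.inl (toGraph_adj.2 ⟨a', b', hm', ho⟩)
  have hv : ∀ z, ¬ (toGraph U).Adj (Sum.inl p) z := by
    intro z hz
    rw [toGraph_adj] at hz
    obtain ⟨a', b', hm, ho⟩ := hz
    rcases ho with ⟨h1, _⟩ | ⟨h1, _⟩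
    · rw [Sum.inl.injEq] at h1
      exact hp (h1 ▸ (hU _ hm).1)
    · exact Sum.inl_ne_inr h1
  constructor
  · rintro ⟨_, hacyc, hreach⟩
    refine ⟨hU, acyclic_mono (Finset.subset_insert _ _) hacyc, ?_⟩
    intro x y hx hy
    have hx' : Sum.elim (· ∈ insert p I) (· ∈ J) x := by
      cases x with
      | inl i => exact Finset.mem_insert_of_mem hx
      | inr j => exact hx
    have hy' : Sum.elim (· ∈ insert p I) (· ∈ J) y := by
      cases y with
      | inl i => exact Finset.mem_insert_of_mem hy
      | inr j => exact hy
    refine leaf_reach hnew hv (hreach x y hx' hy') ?_ ?_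
    · intro h; subst h; exact hp hx
    · intro h; subst h; exact hp hy
  · rintro ⟨_, hacyc, hreach⟩
    refine ⟨?_, leaf_acyclic hle hnew hv hacyc, ?_⟩
    · intro e he
      rcases Finset.mem_insert.1 he with rfl | he'
      · exact ⟨Finset.mem_insert_self _ _, hb⟩
      · exact ⟨Finset.mem_insert_of_mem (hU e he').1, (hU e he').2⟩
    · intro x y hx hy
      have step : ∀ z, Sum.elim (· ∈ insert p I) (· ∈ J) z →
          ∃ z', Sum.elim (· ∈ I) (· ∈ J) z' ∧ (toGraph (insert (p,b) U)).Reachable z z' := by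
        intro z hz
        cases z with
        | inl i =>
          rcases Finset.mem_insert.1 hz with rfl | hi
          · exact ⟨Sum.inr b, hb, hvw.reachable⟩
          · exact ⟨Sum.inl i, hi, SimpleGraph.Reachable.refl _⟩
        | inr j => exact ⟨Sum.inr j, hz, SimpleGraph.Reachable.refl _⟩
      obtain ⟨x', hx', rx⟩ := step x hx
      obtain ⟨y', hy', ry⟩ := step y hy
      exact rx.trans (((hreach x' y' hx' hy').mono hle).trans ry.symm)

lemma isTreeOn_pendants {U : BGraph α β} {I : Finset α} {J : Finset β} (B : Finset β)
    (A P : β → α)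
    (hU : ∀ e ∈ U, e.1 ∈ I ∧ e.2 ∈ J) (hBJ : ∀ b ∈ B, b ∉ J)
    (hA : ∀ b ∈ B, A b ∈ I) (hP : ∀ b ∈ B, P b ∉ I)
    (hPinj : ∀ b ∈ B, ∀ b' ∈ B, P b = P b' → b = b') :
    (IsTreeOn (U ∪ B.biUnion fun b => {(A b, b), (P b, b)}) (I ∪ B.image P) (J ∪ B) ↔
      IsTreeOn U I J) ∧
    (∀ j : β, RD (U ∪ B.biUnion fun b => {(A b, b), (P b, b)}) j =
      if j ∈ B then 2 else RD U j) := by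
  induction B using Finset.induction_on with
  | empty => simp
  | @insert b B' hbB' ih =>
    have hBJ' : ∀ c ∈ B', c ∉ J := fun c hc => hBJ c (Finset.mem_insert_of_mem hc)
    have hA' : ∀ c ∈ B', A c ∈ I := fun c hc => hA c (Finset.mem_insert_of_mem hc)
    have hP' : ∀ c ∈ B', P c ∉ I := fun c hc => hP c (Finset.mem_insert_of_mem hc)
    have hPinj' : ∀ c ∈ B', ∀ c' ∈ B', P c = P c' → c = c' := fun c hc c' hc' =>
      hPinj c (Finset.mem_insert_of_mem hc) c' (Finset.mem_insert_of_mem hc')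
    obtain ⟨ihT, ihRD⟩ := ih hBJ' hA' hP' hPinj'
    set U₁ := U ∪ B'.biUnion (fun b => {(A b, b), (P b, b)}) with hU₁def
    have hbJ : b ∉ J := hBJ b (Finset.mem_insert_self _ _)
    have hbI : A b ∈ I := hA b (Finset.mem_insert_self _ _)
    have hPbI : P b ∉ I := hP b (Finset.mem_insert_self _ _)
    have hEset : U ∪ (insert b B').biUnion (fun b => {(A b, b), (P b, b)}) =
        insert (P b, b) (insert (A b, b) U₁) := by
      rw [Finset.biUnion_insert, hU₁def]
      ext e
      simp only [Finset.mem_union, Finset.mem_insert, Finset.mem_singleton]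
      tauto
    have hU₁edges : ∀ e ∈ U₁, e.1 ∈ I ∪ B'.image P ∧ e.2 ∈ J ∪ B' := by
      intro e he
      rcases Finset.mem_union.1 he with he | he
      · exact ⟨Finset.mem_union_left _ (hU e he).1, Finset.mem_union_left _ (hU e he).2⟩
      · obtain ⟨c, hc, hec⟩ := Finset.mem_biUnion.1 he
        rcases Finset.mem_insert.1 hec with rfl | hec
        · exact ⟨Finset.mem_union_left _ (hA' c hc), Finset.mem_union_right _ hc⟩
        · rw [Finset.mem_singleton] at hec
          subst hec
          exact ⟨Finset.mem_union_right _ (Finset.mem_image_of_mem P hc),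
            Finset.mem_union_right _ hc⟩
    have hAbnotin : (A b, b) ∉ U₁ := by
      intro hmem
      rcases Finset.mem_union.1 hmem with hm | hm
      · exact hbJ (hU _ hm).2
      · obtain ⟨c, hc, hec⟩ := Finset.mem_biUnion.1 hm
        rcases Finset.mem_insert.1 hec with heq | hec
        · rw [Prod.mk.injEq] at heq; exact hbB' (heq.2 ▸ hc)
        · rw [Finset.mem_singleton, Prod.mk.injEq] at hec; exact hbB' (hec.2 ▸ hc)
    have hPbnotin : (P b, b) ∉ insert (A b, b) U₁ := by
      intro hmem
      rcases Finset.mem_insert.1 hmem with heq | hm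
      · rw [Prod.mk.injEq] at heq; exact hPbI (heq.1 ▸ hbI)
      · rcases Finset.mem_union.1 hm with hm' | hm'
        · exact hbJ (hU _ hm').2
        · obtain ⟨c, hc, hec⟩ := Finset.mem_biUnion.1 hm'
          rcases Finset.mem_insert.1 hec with heq | hec
          · rw [Prod.mk.injEq] at heq; exact hbB' (heq.2 ▸ hc)
          · rw [Finset.mem_singleton, Prod.mk.injEq] at hec; exact hbB' (hec.2 ▸ hc)
    have hIset : I ∪ (insert b B').image P = insert (P b) (I ∪ B'.image P) := by
      rw [Finset.image_insert]
      ext x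
      simp only [Finset.mem_union, Finset.mem_insert]
      tauto
    have hJset : J ∪ insert b B' = insert b (J ∪ B') := by
      ext x
      simp only [Finset.mem_union, Finset.mem_insert]
      tauto
    constructor
    · rw [hEset, hIset, hJset]
      have hmid : ∀ e ∈ insert (A b, b) U₁, e.1 ∈ I ∪ B'.image P ∧ e.2 ∈ insert b (J ∪ B') := by
        intro e he
        rcases Finset.mem_insert.1 he with rfl | he'
        · exact ⟨Finset.mem_union_left _ hbI, Finset.mem_insert_self _ _⟩
        · exact ⟨(hU₁edges e he').1, Finset.mem_insert_of_mem (hU₁edges e he').2⟩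
      have hPb' : P b ∉ I ∪ B'.image P := by
        intro hmem
        rcases Finset.mem_union.1 hmem with hm | hm
        · exact hPbI hm
        · obtain ⟨c, hc, hec⟩ := Finset.mem_image.1 hm
          exact hbB' (hPinj c (Finset.mem_insert_of_mem hc) b (Finset.mem_insert_self _ _)
            hec ▸ hc)
      rw [isTreeOn_insert_left hmid hPb' (Finset.mem_insert_self _ _)]
      have hbnotJB : b ∉ J ∪ B' := by
        intro hmem
        rcases Finset.mem_union.1 hmem with hm | hm
        · exact hbJ hm
        · exact hbB' hm
      rw [isTreeOn_insert_right hU₁edges (Finset.mem_union_left _ hbI) hbnotJB]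
      exact ihT
    · intro j
      rw [hEset, RD_insert hPbnotin, RD_insert hAbnotin, ihRD j]
      by_cases hjb : j = b
      · subst hjb
        have h0 : RD U j = 0 := RD_zero (fun e he => (hU e he).2) hbJ
        simp [hbB', h0]
      · simp [Finset.mem_insert, hjb, Ne.symm hjb]

end ToGraphUtil

section LiftB

variable {α α' β : Type*} [DecidableEq α] [DecidableEq α'] [DecidableEq β]

/-- Push a bipartite graph forward along a map on the left vertices. -/
def liftB (f : α → α') (U : BGraph α β) : BGraph α' β := U.image fun e => (f e.1, e.2)

lemma mem_liftB {f : α → α'} {U : BGraph α β} {a' : α'} {b : β} :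
    (a', b) ∈ liftB f U ↔ ∃ a, (a, b) ∈ U ∧ f a = a' := by
  constructor
  · intro h
    obtain ⟨e, he, heq⟩ := Finset.mem_image.1 h
    rw [Prod.mk.injEq] at heq
    refine ⟨e.1, ?_, heq.1⟩
    have he' : (e.1, e.2) ∈ U := he
    exact heq.2 ▸ he'
  · rintro ⟨a, ha, rfl⟩
    exact Finset.mem_image_of_mem _ ha

lemma filter_liftB {f : α → α'} {U : BGraph α β} (j : β) :
    (liftB f U).filter (fun e => e.2 = j) = liftB f (U.filter (fun e => e.2 = j)) := by
  ext ⟨a', b⟩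
  rw [Finset.mem_filter, mem_liftB, mem_liftB]
  constructor
  · rintro ⟨⟨a, ha, rfl⟩, hb⟩
    exact ⟨a, Finset.mem_filter.2 ⟨ha, hb⟩, rfl⟩
  · rintro ⟨a, ha, rfl⟩
    obtain ⟨ha', hb⟩ := Finset.mem_filter.1 ha
    exact ⟨⟨a, ha', rfl⟩, hb⟩

lemma liftB_injective {f : α → α'} (hf : Function.Injective f) :
    Function.Injective (fun e : α × β => (f e.1, e.2)) := by
  intro e e' h
  rw [Prod.mk.injEq] at h
  exact Prod.ext (hf h.1) h.2

lemma RD_liftB {f : α → α'} (hf : Function.Injective f) {U : BGraph α β} (j : β) :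
    RD (liftB f U) j = RD U j := by
  unfold RD
  rw [filter_liftB, liftB, Finset.card_image_of_injective _ (liftB_injective hf)]

/-- The graph homomorphism upward. -/
def liftHom (f : α → α') (U : BGraph α β) : toGraph U →g toGraph (liftB f U) where
  toFun := Sum.map f id
  map_rel' := by
    intro x y hxy
    rw [toGraph_adj] at hxy ⊢
    obtain ⟨a, b, hm, ho⟩ := hxy
    refine ⟨f a, b, mem_liftB.2 ⟨a, hm, rfl⟩, ?_⟩
    rcases ho with ⟨rfl, rfl⟩ | ⟨rfl, rfl⟩
    · exact Or.inl ⟨rfl, rfl⟩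
    · exact Or.inr ⟨rfl, rfl⟩

lemma sum_map_injective {f : α → α'} (hf : Function.Injective f) :
    Function.Injective (Sum.map f (id : β → β)) := by
  intro x y h
  cases x <;> cases y <;> simp only [Sum.map_inl, Sum.map_inr, Sum.inl.injEq, Sum.inr.injEq] at h ⊢
  · exact hf h
  · exact absurd h (Sum.inl_ne_inr)
  · exact absurd h (Sum.inr_ne_inl)
  · exact h

open scoped Classical in
/-- Retraction to the small vertex-type, with a default value. -/
noncomputable def retr (f : α → α') (x₀ : α ⊕ β) : α' ⊕ β → α ⊕ β := fun z =>
  match z with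
  | Sum.inr b => Sum.inr b
  | Sum.inl a' => if h : ∃ a, f a = a' then Sum.inl h.choose else x₀

lemma retr_g {f : α → α'} (hf : Function.Injective f) (x₀ : α ⊕ β) (x : α ⊕ β) :
    retr f x₀ (Sum.map f id x) = x := by
  cases x with
  | inl a =>
    have hex : ∃ a₁, f a₁ = f a := ⟨a, rfl⟩
    simp only [Sum.map_inl, retr, dif_pos hex, Sum.inl.injEq]
    exact hf hex.choose_spec
  | inr b => rfl

lemma retr_adj {f : α → α'} (hf : Function.Injective f) (x₀ : α ⊕ β) {U : BGraph α β}
    {x' y' : α' ⊕ β} (h : (toGraph (liftB f U)).Adj x' y') :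
    (toGraph U).Adj (retr f x₀ x') (retr f x₀ y') := by
  rw [toGraph_adj] at h
  obtain ⟨a', b, hm, ho⟩ := h
  obtain ⟨a, ha, rfl⟩ := mem_liftB.1 hm
  rcases ho with ⟨rfl, rfl⟩ | ⟨rfl, rfl⟩
  · have h1 : retr f x₀ (Sum.inl (f a)) = Sum.inl a := retr_g hf x₀ (Sum.inl a)
    have h2 : retr f x₀ (Sum.inr b) = Sum.inr b := rfl
    rw [h1, h2]
    exact toGraph_adj.2 ⟨a, b, ha, Or.inl ⟨rfl, rfl⟩⟩
  · have h1 : retr f x₀ (Sum.inl (f a)) = Sum.inl a := retr_g hf x₀ (Sum.inl a)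
    have h2 : retr f x₀ (Sum.inr b) = Sum.inr b := rfl
    rw [h1, h2]
    exact toGraph_adj.2 ⟨a, b, ha, Or.inr ⟨rfl, rfl⟩⟩

/-- The retraction graph homomorphism. -/
noncomputable def retrHom (f : α → α') (hf : Function.Injective f) (x₀ : α ⊕ β)
    (U : BGraph α β) : toGraph (liftB f U) →g toGraph U where
  toFun := retr f x₀
  map_rel' := fun h => retr_adj hf x₀ h

lemma reach_liftB_down {f : α → α'} (hf : Function.Injective f) {U : BGraph α β}
    {x y : α ⊕ β}
    (h : (toGraph (liftB f U)).Reachable (Sum.map f id x) (Sum.map f id y)) :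
    (toGraph U).Reachable x y := by
  have h2 := h.map (retrHom f hf x U)
  have e1 : (retrHom f hf x U) (Sum.map f id x) = x := retr_g hf x x
  have e2 : (retrHom f hf x U) (Sum.map f id y) = y := retr_g hf x y
  rwa [e1, e2] at h2

lemma acyclic_liftB {f : α → α'} (hf : Function.Injective f) {U : BGraph α β}
    (hA : Acyclic U) : Acyclic (liftB f U) := by
  intro u c hc
  cases c with
  | nil => exact hc.ne_nil rfl
  | @cons _ z _ h q =>
    -- extract a default inhabitant of α ⊕ β from the first edge
    have h' := h
    rw [toGraph_adj] at h'
    obtain ⟨a', b, hm, _⟩ := h'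
    obtain ⟨a, _, _⟩ := mem_liftB.1 hm
    set x₀ : α ⊕ β := Sum.inl a with hx₀
    set c₀ := Walk.cons h q with hc₀
    set r := retrHom f hf x₀ U with hr
    have hfix : ∀ v ∈ c₀.support, Sum.map f id (retr f x₀ v) = v := by
      intro v hv
      have hnbr : ∃ w, (toGraph (liftB f U)).Adj v w := by
        rcases support_has_nbr c₀ v hv with rfl | hw
        · exact ⟨z, h⟩
        · exact hw
      obtain ⟨w, hw⟩ := hnbr
      rw [toGraph_adj] at hw
      obtain ⟨a₁', b₁, hm₁, ho₁⟩ := hw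
      obtain ⟨a₁, _, rfl⟩ := mem_liftB.1 hm₁
      rcases ho₁ with ⟨rfl, _⟩ | ⟨rfl, _⟩
      · rw [show retr f x₀ (Sum.inl (f a₁)) = Sum.inl a₁ from retr_g hf x₀ (Sum.inl a₁)]
        rfl
      · rfl
    have hmapinj : ∀ v ∈ c₀.support, ∀ w ∈ c₀.support, retr f x₀ v = retr f x₀ w → v = w := by
      intro v hv w hw hvw
      have := congrArg (Sum.map f (id : β → β)) hvw
      rwa [hfix v hv, hfix w hw] at this
    have hcyc' : (c₀.map r).IsCycle := by
      rw [Walk.isCycle_def]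
      rw [Walk.isCycle_def] at hc
      obtain ⟨htrail, hnnil, hnodup⟩ := hc
      refine ⟨?_, ?_, ?_⟩
      · have hcoe : ⇑r = retr f x₀ := rfl
        rw [SimpleGraph.Walk.isTrail_def, Walk.edges_map, hcoe]
        refine List.Nodup.map_on ?_ htrail.edges_nodup
        intro e₁ he₁ e₂ he₂ heq
        have key : ∀ e ∈ c₀.edges,
            Sym2.map (Sum.map f (id : β → β)) (Sym2.map (retr f x₀) e) = e := by
          intro e he
          induction e with
          | _ v w =>
            have hv := c₀.fst_mem_support_of_mem_edges he
            have hw := c₀.snd_mem_support_of_mem_edges he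
            rw [Sym2.map_pair_eq, Sym2.map_pair_eq, hfix v hv, hfix w hw]
        have := congrArg (Sym2.map (Sum.map f (id : β → β))) heq
        rwa [key e₁ he₁, key e₂ he₂] at this
      · rw [Ne, Walk.map_eq_nil_iff]
        exact hnnil
      · have hcoe : ⇑r = retr f x₀ := rfl
        rw [Walk.support_map, hcoe]
        have htl : (c₀.support.map (retr f x₀)).tail = c₀.support.tail.map (retr f x₀) := by
          cases hs : c₀.support with
          | nil => rfl
          | cons hd tl => rfl
        rw [htl]
        refine List.Nodup.map_on ?_ hnodup
        intro v hv w hw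
        exact hmapinj v (List.mem_of_mem_tail hv) w (List.mem_of_mem_tail hw)
    exact hA (c₀.map r) hcyc'

lemma isTreeOn_liftB {f : α → α'} (hf : Function.Injective f) {U : BGraph α β}
    {I : Finset α} {J : Finset β} :
    IsTreeOn (liftB f U) (I.image f) J ↔ IsTreeOn U I J := by
  constructor
  · rintro ⟨hedge, hacyc, hreach⟩
    refine ⟨?_, ?_, ?_⟩
    · intro e he
      have h1 := hedge (f e.1, e.2) (mem_liftB.2 ⟨e.1, by simpa using he, rfl⟩)
      refine ⟨?_, h1.2⟩
      obtain ⟨a, ha, haeq⟩ := Finset.mem_image.1 h1.1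
      exact hf haeq ▸ ha
    · intro u c hcyc
      exact hacyc (c.map (liftHom f U))
        ((SimpleGraph.Walk.map_isCycle_iff_of_injective (sum_map_injective hf)).2 hcyc)
    · intro x y hx hy
      have hgx : Sum.elim (· ∈ I.image f) (· ∈ J) (Sum.map f id x) := by
        cases x with
        | inl i => exact Finset.mem_image_of_mem f hx
        | inr j => exact hx
      have hgy : Sum.elim (· ∈ I.image f) (· ∈ J) (Sum.map f id y) := by
        cases y with
        | inl i => exact Finset.mem_image_of_mem f hy
        | inr j => exact hy
      exact reach_liftB_down hf (hreach _ _ hgx hgy)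
  · rintro ⟨hedge, hacyc, hreach⟩
    refine ⟨?_, acyclic_liftB hf hacyc, ?_⟩
    · intro e' he'
      obtain ⟨e, he, heq⟩ := Finset.mem_image.1 he'
      rw [← heq]
      exact ⟨Finset.mem_image_of_mem f (hedge e he).1, (hedge e he).2⟩
    · intro x' y' hx' hy'
      have lift : ∀ z', Sum.elim (· ∈ I.image f) (· ∈ J) z' →
          ∃ z, Sum.map f (id : β → β) z = z' ∧ Sum.elim (· ∈ I) (· ∈ J) z := by
        intro z' hz'
        cases z' with
        | inl a' =>
          obtain ⟨a, ha, rfl⟩ := Finset.mem_image.1 hz'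
          exact ⟨Sum.inl a, rfl, ha⟩
        | inr b => exact ⟨Sum.inr b, rfl, hz'⟩
      obtain ⟨x, hxeq, hx⟩ := lift x' hx'
      obtain ⟨y, hyeq, hy⟩ := lift y' hy'
      have := (hreach x y hx hy).map (liftHom f U)
      rw [show (liftHom f U) x = Sum.map f id x from rfl,
        show (liftHom f U) y = Sum.map f id y from rfl, hxeq, hyeq] at this
      exact this

end LiftB

section MatchingsEq

variable {α β : Type*} [DecidableEq α] [DecidableEq β]

lemma matching_erase {M : BGraph α β} {S : Finset α} {T : Finset β}
    (h : IsMatching M S T) {a : α} {b : β} (hab : (a, b) ∈ M) :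
    IsMatching (M.erase (a, b)) (S.erase a) (T.erase b) := by
  obtain ⟨hedge, hleft, hright⟩ := h
  have haS : a ∈ S := (hedge _ hab).1
  have hbT : b ∈ T := (hedge _ hab).2
  refine ⟨?_, ?_, ?_⟩
  · intro e he
    obtain ⟨hne, heM⟩ := Finset.mem_erase.1 he
    constructor
    · rw [Finset.mem_erase]
      refine ⟨?_, (hedge e heM).1⟩
      intro h1
      obtain ⟨b', hb', hub'⟩ := hleft a haS
      have e1 : b = b' := hub' b hab
      have e2 : e.2 = b' := hub' e.2 (by rw [← h1]; exact heM)
      exact hne (Prod.ext h1 (e2.trans e1.symm))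
    · rw [Finset.mem_erase]
      refine ⟨?_, (hedge e heM).2⟩
      intro h2
      obtain ⟨a', ha', hua'⟩ := hright b hbT
      have e1 : a = a' := hua' a hab
      have e2 : e.1 = a' := hua' e.1 (by rw [← h2]; exact heM)
      exact hne (Prod.ext (e2.trans e1.symm) h2)
  · intro a' ha'
    obtain ⟨hne, ha'S⟩ := Finset.mem_erase.1 ha'
    obtain ⟨b', hb', hub'⟩ := hleft a' ha'S
    refine ⟨b', Finset.mem_erase.2 ⟨?_, hb'⟩, ?_⟩
    · intro heq
      rw [Prod.mk.injEq] at heq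
      exact hne heq.1
    · intro y hy
      exact hub' y (Finset.mem_erase.1 hy).2
  · intro b' hb'
    have hb'T : b' ∈ T := (Finset.mem_erase.1 hb').2
    have hneb : b' ≠ b := (Finset.mem_erase.1 hb').1
    obtain ⟨a', ha', hua'⟩ := hright b' hb'T
    refine ⟨a', Finset.mem_erase.2 ⟨?_, ha'⟩, ?_⟩
    · intro heq
      rw [Prod.mk.injEq] at heq
      exact hneb heq.2
    · intro y hy
      exact hua' y (Finset.mem_erase.1 hy).2

lemma matchings_eq [Fintype α] [Fintype β] {U M M' : BGraph α β} {S : Finset α} {T : Finset β}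
    (hA : Acyclic U) (hMU : M ⊆ U) (hM'U : M' ⊆ U)
    (hM : IsMatching M S T) (hM' : IsMatching M' S T) : M = M' := by
  suffices H : ∀ (n : ℕ) (S : Finset α) (T : Finset β) (M M' : BGraph α β), S.card = n →
      M ⊆ U → M' ⊆ U → IsMatching M S T → IsMatching M' S T → M = M' from
    H S.card S T M M' rfl hMU hM'U hM hM'
  intro n
  induction n using Nat.strong_induction_on with
  | _ n ih =>
    intro S T M M' hn hMU hM'U hM hM'
    rcases Finset.eq_empty_or_nonempty S with rfl | hS
    · have h1 : M = ∅ := Finset.eq_empty_of_forall_notMem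
        (fun e he => by simpa using (hM.1 e he).1)
      have h2 : M' = ∅ := Finset.eq_empty_of_forall_notMem
        (fun e he => by simpa using (hM'.1 e he).1)
      rw [h1, h2]
    · have hclaim : ∃ a ∈ S, ∃ b, (a, b) ∈ M ∧ (a, b) ∈ M' := by
        by_contra hcon
        push_neg at hcon
        have hDU : M ∪ M' ⊆ U := Finset.union_subset hMU hM'U
        have hAD : Acyclic (M ∪ M') := acyclic_mono hDU hA
        have h2 : ∀ z z', (toGraph (M ∪ M')).Adj z z' →
            ∃ w₁ w₂, (toGraph (M ∪ M')).Adj z w₁ ∧ (toGraph (M ∪ M')).Adj z w₂ ∧ w₁ ≠ w₂ := by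
          intro z z' hzz
          rw [toGraph_adj] at hzz
          obtain ⟨a, b, hm, ho⟩ := hzz
          rcases ho with ⟨rfl, _⟩ | ⟨rfl, _⟩
          · have haS : a ∈ S := by
              rcases Finset.mem_union.1 hm with hm' | hm'
              · exact (hM.1 _ hm').1
              · exact (hM'.1 _ hm').1
            obtain ⟨bM, hbM, _⟩ := hM.2.1 a haS
            obtain ⟨bM', hbM', _⟩ := hM'.2.1 a haS
            have hbne : bM ≠ bM' := fun h => hcon a haS bM hbM (h ▸ hbM')
            refine ⟨Sum.inr bM, Sum.inr bM', ?_, ?_, by simp [hbne]⟩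
            · exact toGraph_adj.2 ⟨a, bM, Finset.mem_union_left _ hbM, Or.inl ⟨rfl, rfl⟩⟩
            · exact toGraph_adj.2 ⟨a, bM', Finset.mem_union_right _ hbM', Or.inl ⟨rfl, rfl⟩⟩
          · have hbT : b ∈ T := by
              rcases Finset.mem_union.1 hm with hm' | hm'
              · exact (hM.1 _ hm').2
              · exact (hM'.1 _ hm').2
            obtain ⟨aM, haM, _⟩ := hM.2.2 b hbT
            obtain ⟨aM', haM', _⟩ := hM'.2.2 b hbT
            have hane : aM ≠ aM' := fun h =>
              hcon aM (hM.1 _ haM).1 b haM (h ▸ haM')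
            refine ⟨Sum.inl aM, Sum.inl aM', ?_, ?_, by simp [hane]⟩
            · exact toGraph_adj.2 ⟨aM, b, Finset.mem_union_left _ haM, Or.inr ⟨rfl, rfl⟩⟩
            · exact toGraph_adj.2 ⟨aM', b, Finset.mem_union_right _ haM', Or.inr ⟨rfl, rfl⟩⟩
        have hnoedge := acyclic_no_branching hAD h2
        obtain ⟨a, haS⟩ := hS
        obtain ⟨b, hab, _⟩ := hM.2.1 a haS
        exact hnoedge _ _ (toGraph_adj.2 ⟨a, b, Finset.mem_union_left _ hab, Or.inl ⟨rfl, rfl⟩⟩)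
      obtain ⟨a, haS, b, habM, habM'⟩ := hclaim
      have hMe := matching_erase hM habM
      have hM'e := matching_erase hM' habM'
      have hcard : (S.erase a).card < n := by
        rw [Finset.card_erase_of_mem haS]
        have : 1 ≤ S.card := Finset.card_pos.2 hS
        omega
      have heq := ih _ hcard (S.erase a) (T.erase b) (M.erase (a, b)) (M'.erase (a, b)) rfl
        ((M.erase_subset _).trans hMU) ((M'.erase_subset _).trans hM'U) hMe hM'e
      have h1 : M = insert (a, b) (M.erase (a, b)) := (Finset.insert_erase habM).symm
      have h2 : M' = insert (a, b) (M'.erase (a, b)) := (Finset.insert_erase habM').symm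
      rw [h1, h2, heq]

end MatchingsEq

section MatchHelpers

variable {α β : Type*} [DecidableEq α] [DecidableEq β]

lemma matching_insert {M : BGraph α β} {S : Finset α} {T : Finset β}
    (h : IsMatching M S T) {a : α} {b : β} (ha : a ∉ S) (hb : b ∉ T) :
    IsMatching (insert (a, b) M) (insert a S) (insert b T) := by
  obtain ⟨hedge, hleft, hright⟩ := h
  refine ⟨?_, ?_, ?_⟩
  · intro e he
    rcases Finset.mem_insert.1 he with rfl | he'
    · exact ⟨Finset.mem_insert_self _ _, Finset.mem_insert_self _ _⟩
    · exact ⟨Finset.mem_insert_of_mem (hedge e he').1, Finset.mem_insert_of_mem (hedge e he').2⟩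
  · intro a' ha'
    rcases Finset.mem_insert.1 ha' with rfl | ha''
    · refine ⟨b, Finset.mem_insert_self _ _, ?_⟩
      intro y hy
      rcases Finset.mem_insert.1 hy with heq | hy'
      · rw [Prod.mk.injEq] at heq; exact heq.2
      · exact absurd (hedge _ hy').1 ha
    · obtain ⟨b', hb', hub⟩ := hleft a' ha''
      refine ⟨b', Finset.mem_insert_of_mem hb', ?_⟩
      intro y hy
      rcases Finset.mem_insert.1 hy with heq | hy'
      · rw [Prod.mk.injEq] at heq
        exact absurd (heq.1 ▸ ha'') ha
      · exact hub y hy'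
  · intro b' hb'
    rcases Finset.mem_insert.1 hb' with rfl | hb''
    · refine ⟨a, Finset.mem_insert_self _ _, ?_⟩
      intro y hy
      rcases Finset.mem_insert.1 hy with heq | hy'
      · rw [Prod.mk.injEq] at heq; exact heq.1
      · exact absurd (hedge _ hy').2 hb
    · obtain ⟨a', ha', hua⟩ := hright b' hb''
      refine ⟨a', Finset.mem_insert_of_mem ha', ?_⟩
      intro y hy
      rcases Finset.mem_insert.1 hy with heq | hy'
      · rw [Prod.mk.injEq] at heq
        exact absurd (heq.2 ▸ hb'') hb
      · exact hua y hy'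

lemma matching_card_eq {M : BGraph α β} {S : Finset α} {T : Finset β}
    (h : IsMatching M S T) : S.card = T.card := by
  have h1 : M.card = S.card := by
    refine Finset.card_bij (fun e _ => e.1) (fun e he => (h.1 e he).1) ?_ ?_
    · intro e₁ h₁ e₂ h₂ heq
      have heq' : e₁.1 = e₂.1 := heq
      obtain ⟨b', hb', hub⟩ := h.2.1 e₁.1 (h.1 _ h₁).1
      have e1 : e₁.2 = b' := hub e₁.2 h₁
      have e2 : e₂.2 = b' := hub e₂.2 (by rw [heq']; exact h₂)
      exact Prod.ext heq' (e1.trans e2.symm)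
    · intro a ha
      obtain ⟨b, hb, _⟩ := h.2.1 a ha
      exact ⟨(a, b), hb, rfl⟩
  have h2 : M.card = T.card := by
    refine Finset.card_bij (fun e _ => e.2) (fun e he => (h.1 e he).2) ?_ ?_
    · intro e₁ h₁ e₂ h₂ heq
      have heq' : e₁.2 = e₂.2 := heq
      obtain ⟨a', ha', hua⟩ := h.2.2 e₁.2 (h.1 _ h₁).2
      have e1 : e₁.1 = a' := hua e₁.1 h₁
      have e2 : e₂.1 = a' := hua e₂.1 (by rw [heq']; exact h₂)
      exact Prod.ext (e1.trans e2.symm) heq'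
    · intro b hb
      obtain ⟨a, ha, _⟩ := h.2.2 b hb
      exact ⟨(a, b), ha, rfl⟩
  rw [← h1, h2]

end MatchHelpers

section ReduceSigma

variable {n d : ℕ}

lemma mem_inl_reduceSigma {I : Finset (Fin n)} {J : Finset (Fin d)} {i : Fin n} :
    Sum.inl i ∈ reduceSigma I J ↔ i ∈ I := by
  simp [reduceSigma]

lemma mem_inr_reduceSigma {I : Finset (Fin n)} {J : Finset (Fin d)} {j : Fin d} :
    Sum.inr j ∈ reduceSigma I J ↔ j ∉ J := by
  simp [reduceSigma]

lemma card_reduceSigma (I : Finset (Fin n)) (J : Finset (Fin d)) :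
    (reduceSigma I J).card = I.card + (d - J.card) := by
  rw [reduceSigma, Finset.card_union_of_disjoint, Finset.card_image_of_injective _ Sum.inl_injective,
    Finset.card_image_of_injective _ Sum.inr_injective, Finset.card_compl, Fintype.card_fin]
  rw [Finset.disjoint_left]
  rintro x hx hy
  obtain ⟨i, _, rfl⟩ := Finset.mem_image.1 hx
  obtain ⟨j, _, hj⟩ := Finset.mem_image.1 hy
  exact Sum.inr_ne_inl hj

lemma J_card_le {J : Finset (Fin d)} : J.card ≤ d := by
  have h := Finset.card_le_univ J
  rwa [Fintype.card_fin] at h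

lemma card_reduceSigma_eq {I : Finset (Fin n)} {J : Finset (Fin d)} (h : I.card = J.card) :
    (reduceSigma I J).card = d := by
  rw [card_reduceSigma, h]
  have := J_card_le (J := J)
  omega

lemma card_reduceSigma_ne {I : Finset (Fin n)} {J : Finset (Fin d)} (h : I.card ≠ J.card) :
    (reduceSigma I J).card ≠ d := by
  rw [card_reduceSigma]
  have := J_card_le (J := J)
  omega

/-- The left part of a subset `σ`. -/
def sigI (σ : Finset (Fin n ⊕ Fin d)) : Finset (Fin n) :=
  Finset.univ.filter (fun i => Sum.inl i ∈ σ)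

/-- The right part (complemented) of a subset `σ`. -/
def sigJ (σ : Finset (Fin n ⊕ Fin d)) : Finset (Fin d) :=
  Finset.univ.filter (fun j => Sum.inr j ∉ σ)

lemma reduceSigma_sig (σ : Finset (Fin n ⊕ Fin d)) : reduceSigma (sigI σ) (sigJ σ) = σ := by
  ext x
  cases x with
  | inl i => simp [mem_inl_reduceSigma, sigI]
  | inr j => simp [mem_inr_reduceSigma, sigJ]

lemma sigI_reduce (I : Finset (Fin n)) (J : Finset (Fin d)) : sigI (reduceSigma I J) = I := by
  ext i
  simp [sigI, mem_inl_reduceSigma]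

lemma sigJ_reduce (I : Finset (Fin n)) (J : Finset (Fin d)) : sigJ (reduceSigma I J) = J := by
  ext j
  simp [sigJ, mem_inr_reduceSigma]

lemma sig_card (σ : Finset (Fin n ⊕ Fin d)) :
    σ.card = (sigI σ).card + (d - (sigJ σ).card) := by
  conv_lhs => rw [← reduceSigma_sig σ]
  rw [card_reduceSigma]

lemma sig_card_eq {σ : Finset (Fin n ⊕ Fin d)} (h : σ.card = d) :
    (sigI σ).card = (sigJ σ).card := by
  have h1 := sig_card σ
  have h2 : (sigJ σ).card ≤ d := J_card_le
  have h3 : d - (sigJ σ).card ≤ d := Nat.sub_le _ _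
  omega

lemma sig_card_succ {σ : Finset (Fin n ⊕ Fin d)} (h : σ.card = d + 1) :
    (sigI σ).card = (sigJ σ).card + 1 := by
  have h1 := sig_card σ
  have h2 : (sigJ σ).card ≤ d := J_card_le
  omega

lemma reduceSigma_erase_left (I : Finset (Fin n)) (J : Finset (Fin d)) (i : Fin n) :
    reduceSigma (I.erase i) J = (reduceSigma I J).erase (Sum.inl i) := by
  ext x
  cases x with
  | inl i' =>
    simp only [mem_inl_reduceSigma, Finset.mem_erase, ne_eq, Sum.inl.injEq]
    try tauto
  | inr j =>
    simp only [mem_inr_reduceSigma, Finset.mem_erase, ne_eq]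
    have : ¬ (Sum.inr j : Fin n ⊕ Fin d) = Sum.inl i := Sum.inr_ne_inl
    tauto

lemma reduceSigma_insert_right (I : Finset (Fin n)) {J : Finset (Fin d)} {b : Fin d}
    (hb : b ∉ J) : reduceSigma I (insert b J) = (reduceSigma I J).erase (Sum.inr b) := by
  ext x
  cases x with
  | inl i' =>
    simp only [mem_inl_reduceSigma, Finset.mem_erase, ne_eq]
    have : ¬ (Sum.inl i' : Fin n ⊕ Fin d) = Sum.inr b := Sum.inl_ne_inr
    tauto
  | inr j =>
    simp only [mem_inr_reduceSigma, Finset.mem_erase, Finset.mem_insert, ne_eq, Sum.inr.injEq]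
    try tauto

end ReduceSigma

section PointedLemmas

variable {n d : ℕ}

/-- The reduction of a pointed matching field. -/
def redM (F : PointedMF n d) (I : Finset (Fin n)) (J : Finset (Fin d)) :
    BGraph (Fin n) (Fin d) :=
  Finset.univ.filter fun e : Fin n × Fin d => (Sum.inl e.1, e.2) ∈ F.M (reduceSigma I J)

lemma mem_redM {F : PointedMF n d} {I : Finset (Fin n)} {J : Finset (Fin d)} {i : Fin n}
    {j : Fin d} : (i, j) ∈ redM F I J ↔ (Sum.inl i, j) ∈ F.M (reduceSigma I J) := by
  simp [redM]

lemma redM_junk {F : PointedMF n d} {I : Finset (Fin n)} {J : Finset (Fin d)}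
    (h : I.card ≠ J.card) : redM F I J = ∅ := by
  rw [redM, F.junk _ (card_reduceSigma_ne h)]
  simp

lemma pointed_partner {F : PointedMF n d} {σ : Finset (Fin n ⊕ Fin d)} (hσ : σ.card = d)
    {k b : Fin d} (hk : Sum.inr k ∈ σ) (hb : (Sum.inr k, b) ∈ F.M σ) : b = k := by
  obtain ⟨b', hb', hub⟩ := (F.matching σ hσ).2.1 (Sum.inr k) hk
  rw [hub b hb, hub k (F.pointed σ hσ k hk)]

lemma mem_M_inr {F : PointedMF n d} {I : Finset (Fin n)} {J : Finset (Fin d)}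
    (hIJ : I.card = J.card) {k b : Fin d} :
    (Sum.inr k, b) ∈ F.M (reduceSigma I J) ↔ k ∉ J ∧ b = k := by
  have hσ := card_reduceSigma_eq hIJ
  constructor
  · intro h
    have hk : Sum.inr k ∈ reduceSigma I J := ((F.matching _ hσ).1 _ h).1
    exact ⟨mem_inr_reduceSigma.1 hk, pointed_partner hσ hk h⟩
  · rintro ⟨hk, rfl⟩
    exact F.pointed _ hσ b (mem_inr_reduceSigma.2 hk)

lemma redM_matching {F : PointedMF n d} {I : Finset (Fin n)} {J : Finset (Fin d)}
    (hIJ : I.card = J.card) : IsMatching (redM F I J) I J := by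
  have hσ := card_reduceSigma_eq hIJ
  obtain ⟨hedge, hleft, hright⟩ := F.matching _ hσ
  refine ⟨?_, ?_, ?_⟩
  · rintro ⟨i, j⟩ he
    rw [mem_redM] at he
    refine ⟨mem_inl_reduceSigma.1 (hedge _ he).1, ?_⟩
    by_contra hjJ
    obtain ⟨x, hx, hux⟩ := hright j (Finset.mem_univ j)
    have h1 := hux _ he
    have h2 := hux _ (F.pointed _ hσ j (mem_inr_reduceSigma.2 hjJ))
    rw [← h2] at h1
    exact Sum.inl_ne_inr h1
  · intro i hi
    obtain ⟨b, hb, hub⟩ := hleft (Sum.inl i) (mem_inl_reduceSigma.2 hi)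
    exact ⟨b, mem_redM.2 hb, fun y hy => hub y (mem_redM.1 hy)⟩
  · intro j hj
    obtain ⟨x, hx, hux⟩ := hright j (Finset.mem_univ j)
    have hxσ : x ∈ reduceSigma I J := (hedge _ hx).1
    cases x with
    | inr k =>
      exfalso
      have hjk : j = k := pointed_partner hσ hxσ hx
      exact (mem_inr_reduceSigma.1 hxσ) (hjk ▸ hj)
    | inl i =>
      refine ⟨i, mem_redM.2 hx, ?_⟩
      intro y hy
      exact Sum.inl_injective (hux (Sum.inl y) (mem_redM.1 hy))

lemma M_decomp {F : PointedMF n d} {I : Finset (Fin n)} {J : Finset (Fin d)}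
    (hIJ : I.card = J.card) :
    F.M (reduceSigma I J) =
      liftB Sum.inl (redM F I J) ∪ Jᶜ.image (fun k => (Sum.inr k, k)) := by
  ext ⟨x, b⟩
  cases x with
  | inl i =>
    rw [Finset.mem_union]
    constructor
    · intro h
      exact Or.inl (mem_liftB.2 ⟨i, mem_redM.2 h, rfl⟩)
    · rintro (h | h)
      · obtain ⟨a, ha, haeq⟩ := mem_liftB.1 h
        rw [← Sum.inl_injective haeq]
        exact mem_redM.1 ha
      · exfalso
        obtain ⟨k, _, hk⟩ := Finset.mem_image.1 h
        rw [Prod.mk.injEq] at hk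
        exact Sum.inr_ne_inl hk.1
  | inr k =>
    rw [Finset.mem_union, mem_M_inr hIJ]
    constructor
    · rintro ⟨hk, rfl⟩
      exact Or.inr (Finset.mem_image.2 ⟨b, Finset.mem_compl.2 hk, rfl⟩)
    · rintro (h | h)
      · exfalso
        obtain ⟨a, _, haeq⟩ := mem_liftB.1 h
        exact Sum.inl_ne_inr haeq
      · obtain ⟨k', hk', heq⟩ := Finset.mem_image.1 h
        rw [Prod.mk.injEq] at heq
        obtain ⟨h1, rfl⟩ := heq
        have := Sum.inr_injective h1
        subst this
        exact ⟨Finset.mem_compl.1 hk', rfl⟩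

lemma redM_swap {F : PointedMF n d} {I : Finset (Fin n)} {J : Finset (Fin d)}
    (hIJ : I.card = J.card) {i : Fin n} {j : Fin d} (hij : (i, j) ∈ redM F I J) :
    redM F (I.erase i) (J.erase j) = (redM F I J).erase (i, j) := by
  obtain ⟨hiI, hjJ⟩ := (redM_matching hIJ).1 _ hij
  have hσcard : (reduceSigma I J).card = d := card_reduceSigma_eq hIJ
  have hjσ : Sum.inr j ∉ reduceSigma I J := fun h => (mem_inr_reduceSigma.1 h) hjJ
  set τ := insert (Sum.inr j) (reduceSigma I J) with hτdef
  have hτcard : τ.card = d + 1 := by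
    rw [hτdef, Finset.card_insert_of_notMem hjσ, hσcard]
  obtain ⟨hTree, _⟩ := F.linkage τ hτcard
  have hAc : Acyclic (τ.biUnion fun x => F.M (τ.erase x)) := hTree.2.1
  have hσ_er : τ.erase (Sum.inr j) = reduceSigma I J := Finset.erase_insert hjσ
  have hiτ : Sum.inl i ∈ τ := Finset.mem_insert_of_mem (mem_inl_reduceSigma.2 hiI)
  have hjτ : Sum.inr j ∈ τ := Finset.mem_insert_self _ _
  have hσ' : reduceSigma (I.erase i) (J.erase j) = τ.erase (Sum.inl i) := by
    ext x
    cases x with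
    | inl i' =>
      simp only [hτdef, mem_inl_reduceSigma, Finset.mem_erase, Finset.mem_insert, ne_eq,
        Sum.inl.injEq]
      constructor
      · rintro ⟨hne, hmem⟩
        exact ⟨hne, Or.inr hmem⟩
      · rintro ⟨hne, h | hmem⟩
        · exact absurd h Sum.inl_ne_inr
        · exact ⟨hne, hmem⟩
    | inr k =>
      simp only [hτdef, mem_inr_reduceSigma, Finset.mem_erase, Finset.mem_insert, ne_eq,
        Sum.inr.injEq, Finset.mem_erase]
      constructor
      · intro hk
        refine ⟨Sum.inr_ne_inl, ?_⟩
        by_cases hkj : k = j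
        · exact Or.inl hkj
        · exact Or.inr (fun hkJ => hk ⟨hkj, hkJ⟩)
      · rintro ⟨_, hkj | hmem⟩
        · exact fun hc => hc.1 hkj
        · exact fun hc => hmem hc.2
  have hsub1 : F.M (reduceSigma I J) ⊆ τ.biUnion fun x => F.M (τ.erase x) := by
    rw [← hσ_er]
    exact Finset.subset_biUnion_of_mem (fun x => F.M (τ.erase x)) hjτ
  have hsub2 : F.M (τ.erase (Sum.inl i)) ⊆ τ.biUnion fun x => F.M (τ.erase x) :=
    Finset.subset_biUnion_of_mem (fun x => F.M (τ.erase x)) hiτ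
  have hτicard : (τ.erase (Sum.inl i)).card = d := by
    rw [Finset.card_erase_of_mem hiτ, hτcard]
    omega
  have hijM : (Sum.inl i, j) ∈ F.M (reduceSigma I J) := mem_redM.1 hij
  have hbase := matching_erase (F.matching _ hσcard) hijM
  have hjnotin : Sum.inr j ∉ (reduceSigma I J).erase (Sum.inl i) :=
    fun h => hjσ (Finset.mem_of_mem_erase h)
  have hNmatch0 := matching_insert hbase hjnotin (Finset.notMem_erase j Finset.univ)
  have hset1 : insert (Sum.inr j) ((reduceSigma I J).erase (Sum.inl i)) =
      τ.erase (Sum.inl i) := by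
    rw [hτdef, Finset.erase_insert_of_ne (Sum.inr_ne_inl)]
  have hset2 : insert j (Finset.univ.erase j) = (Finset.univ : Finset (Fin d)) :=
    Finset.insert_erase (Finset.mem_univ j)
  rw [hset1, hset2] at hNmatch0
  have hNsub : insert (Sum.inr j, j) ((F.M (reduceSigma I J)).erase (Sum.inl i, j)) ⊆
      τ.biUnion fun x => F.M (τ.erase x) := by
    intro e he
    rcases Finset.mem_insert.1 he with rfl | he'
    · exact hsub2 (F.pointed _ hτicard j (Finset.mem_erase.2 ⟨Sum.inr_ne_inl, hjτ⟩))
    · exact hsub1 (Finset.mem_of_mem_erase he')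
  have hkey : F.M (τ.erase (Sum.inl i)) =
      insert (Sum.inr j, j) ((F.M (reduceSigma I J)).erase (Sum.inl i, j)) :=
    matchings_eq hAc hsub2 hNsub (F.matching _ hτicard) hNmatch0
  ext ⟨a, b⟩
  rw [mem_redM, hσ', hkey, Finset.mem_insert, Finset.mem_erase, Finset.mem_erase, mem_redM]
  simp only [Prod.mk.injEq, ne_eq, Sum.inl.injEq]
  constructor
  · rintro (⟨h1, _⟩ | ⟨hne, hmem⟩)
    · exact absurd h1 Sum.inl_ne_inr
    · exact ⟨hne, hmem⟩
  · rintro ⟨hne, hmem⟩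
    exact Or.inr ⟨hne, hmem⟩

lemma redM_closure {F : PointedMF n d} (I : Finset (Fin n)) (J : Finset (Fin d))
    (I' : Finset (Fin n)) (J' : Finset (Fin d)) (N : BGraph (Fin n) (Fin d))
    (hIJ : I.card = J.card) (hI' : I' ⊆ I) (hJ' : J' ⊆ J) (hNsub : N ⊆ redM F I J)
    (hNmatch : IsMatching N I' J') : N = redM F I' J' := by
  suffices H : ∀ (k : ℕ) (I : Finset (Fin n)) (J : Finset (Fin d)), I.card = k →
      I.card = J.card → I' ⊆ I → J' ⊆ J → N ⊆ redM F I J → N = redM F I' J' from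
    H I.card I J rfl hIJ hI' hJ' hNsub
  intro k
  induction k using Nat.strong_induction_on with
  | _ k ih =>
    intro I J hk hIJ hI' hJ' hNsub
    by_cases hII : I ⊆ I'
    · have hIe : I' = I := Finset.Subset.antisymm hI' hII
      have hJcards : J'.card = J.card := by
        rw [← matching_card_eq hNmatch, hIe, hIJ]
      have hJe : J' = J := Finset.eq_of_subset_of_card_le hJ' (le_of_eq hJcards.symm)
      subst hIe
      subst hJe
      refine Finset.Subset.antisymm hNsub ?_
      rintro ⟨i, b⟩ he
      have hi : i ∈ I' := ((redM_matching hIJ).1 _ he).1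
      obtain ⟨bN, hbN, _⟩ := hNmatch.2.1 i hi
      have hbN' : (i, bN) ∈ redM F I' J' := hNsub hbN
      obtain ⟨b0, hb0, hub⟩ := (redM_matching hIJ).2.1 i hi
      have e1 : b = b0 := hub b he
      have e2 : bN = b0 := hub bN hbN'
      rw [e1, ← e2]
      exact hbN
    · obtain ⟨i, hiI, hiI'⟩ := Finset.not_subset.1 hII
      obtain ⟨j, hij, _⟩ := (redM_matching hIJ).2.1 i hiI
      have hjJ : j ∈ J := ((redM_matching hIJ).1 _ hij).2
      have hjJ' : j ∉ J' := by
        intro hjJ'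
        obtain ⟨a, haN, _⟩ := hNmatch.2.2 j hjJ'
        have haI' : a ∈ I' := (hNmatch.1 _ haN).1
        obtain ⟨a0, ha0, hua⟩ := (redM_matching hIJ).2.2 j hjJ
        have e1 : a = a0 := hua a (hNsub haN)
        have e2 : i = a0 := hua i hij
        exact hiI' (e2 ▸ e1 ▸ haI')
      have hswap := redM_swap hIJ hij
      have hNsub' : N ⊆ redM F (I.erase i) (J.erase j) := by
        rw [hswap]
        intro e he
        refine Finset.mem_erase.2 ⟨?_, hNsub he⟩
        rintro rfl
        exact hiI' (hNmatch.1 _ he).1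
      have hcard' : (I.erase i).card < k := by
        rw [Finset.card_erase_of_mem hiI, hk]
        have : 1 ≤ k := by
          rw [← hk]
          exact Finset.card_pos.2 ⟨i, hiI⟩
        omega
      refine ih _ hcard' (I.erase i) (J.erase j) rfl ?_ ?_ ?_ hNsub'
      · rw [Finset.card_erase_of_mem hiI, Finset.card_erase_of_mem hjJ, hIJ]
      · intro x hx
        exact Finset.mem_erase.2 ⟨fun h => hiI' (h ▸ hx), hI' hx⟩
      · intro x hx
        exact Finset.mem_erase.2 ⟨fun h => hjJ' (h ▸ hx), hJ' hx⟩

end PointedLemmas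


section CoreLinkage

variable {n d : ℕ}

lemma core_linkage
    (Mfull : Finset (Fin n ⊕ Fin d) → BGraph (Fin n ⊕ Fin d) (Fin d))
    (Mred : Finset (Fin n) → Finset (Fin d) → BGraph (Fin n) (Fin d))
    (I₁ : Finset (Fin n)) (J₁ : Finset (Fin d)) (hcard : I₁.card = J₁.card + 1)
    (ib : Fin d → Fin n) (hib : ∀ b, b ∉ J₁ → ib b ∈ I₁)
    (hdecomp : ∀ I J, I.card = J.card →
      Mfull (reduceSigma I J) = liftB Sum.inl (Mred I J) ∪ Jᶜ.image (fun k => (Sum.inr k, k)))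
    (hsplit : ∀ b, b ∉ J₁ →
      Mred I₁ (insert b J₁) = insert (ib b, b) (Mred (I₁.erase (ib b)) J₁))
    (hedges : ∀ i ∈ I₁, ∀ e ∈ Mred (I₁.erase i) J₁, e.1 ∈ I₁.erase i ∧ e.2 ∈ J₁) :
    ((IsTreeOn ((reduceSigma I₁ J₁).biUnion fun x => Mfull ((reduceSigma I₁ J₁).erase x))
        (reduceSigma I₁ J₁) Finset.univ ∧
      ∀ j : Fin d,
        RD ((reduceSigma I₁ J₁).biUnion fun x => Mfull ((reduceSigma I₁ J₁).erase x)) j = 2)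
    ↔ (IsTreeOn (I₁.biUnion fun i => Mred (I₁.erase i) J₁) I₁ J₁ ∧
      ∀ j ∈ J₁, RD (I₁.biUnion fun i => Mred (I₁.erase i) J₁) j = 2)) := by
  set τ := reduceSigma I₁ J₁ with hτ
  set Ur := I₁.biUnion (fun i => Mred (I₁.erase i) J₁) with hUrdef
  have hI₁ne : I₁.Nonempty := Finset.card_pos.1 (by omega)
  have hErL : ∀ i ∈ I₁, τ.erase (Sum.inl i) = reduceSigma (I₁.erase i) J₁ := by
    intro i _
    rw [hτ, ← reduceSigma_erase_left]
  have hErR : ∀ b, b ∉ J₁ → τ.erase (Sum.inr b) = reduceSigma I₁ (insert b J₁) := by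
    intro b hb
    rw [hτ, ← reduceSigma_insert_right I₁ hb]
  have hcardL : ∀ i ∈ I₁, (I₁.erase i).card = J₁.card := by
    intro i hi
    rw [Finset.card_erase_of_mem hi, hcard]
    omega
  have hcardR : ∀ b, b ∉ J₁ → I₁.card = (insert b J₁).card := by
    intro b hb
    rw [Finset.card_insert_of_notMem hb, hcard]
  have h1 : ∀ i ∈ I₁, Mfull (τ.erase (Sum.inl i)) =
      liftB Sum.inl (Mred (I₁.erase i) J₁) ∪ J₁ᶜ.image (fun k => (Sum.inr k, k)) := by
    intro i hi
    rw [hErL i hi, hdecomp _ _ (hcardL i hi)]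
  have h2 : ∀ b, b ∉ J₁ → Mfull (τ.erase (Sum.inr b)) =
      liftB Sum.inl (insert (ib b, b) (Mred (I₁.erase (ib b)) J₁)) ∪
        (insert b J₁)ᶜ.image (fun k => (Sum.inr k, k)) := by
    intro b hb
    rw [hErR b hb, hdecomp _ _ (hcardR b hb), hsplit b hb]
  have hliftins : ∀ (b : Fin d) (W : BGraph (Fin n) (Fin d)) (a : Fin n),
      liftB (Sum.inl : Fin n → Fin n ⊕ Fin d) (insert (a, b) W) =
        insert (Sum.inl a, b) (liftB (Sum.inl : Fin n → Fin n ⊕ Fin d) W) := by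
    intro b W a
    rw [liftB, liftB, Finset.image_insert]
  have hUf : (τ.biUnion fun x => Mfull (τ.erase x)) = liftB Sum.inl Ur ∪
      J₁ᶜ.biUnion (fun b => {((fun b => Sum.inl (ib b)) b, b),
        ((fun b => (Sum.inr b : Fin n ⊕ Fin d)) b, b)}) := by
    ext e
    simp only [Finset.mem_biUnion, Finset.mem_union]
    constructor
    · rintro ⟨x, hxτ, he⟩
      cases x with
      | inl i =>
        have hi : i ∈ I₁ := mem_inl_reduceSigma.1 hxτ
        rw [h1 i hi] at he
        rcases Finset.mem_union.1 he with he | he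
        · left
          refine Finset.image_subset_image ?_ he
          exact Finset.subset_biUnion_of_mem (fun i => Mred (I₁.erase i) J₁) hi
        · right
          obtain ⟨k, hk, rfl⟩ := Finset.mem_image.1 he
          exact ⟨k, hk, by simp⟩
      | inr b =>
        have hb : b ∉ J₁ := mem_inr_reduceSigma.1 hxτ
        rw [h2 b hb, hliftins] at he
        rcases Finset.mem_union.1 he with he | he
        · rcases Finset.mem_insert.1 he with rfl | he
          · exact Or.inr ⟨b, Finset.mem_compl.2 hb, by simp⟩
          · left
            refine Finset.image_subset_image ?_ he
            exact Finset.subset_biUnion_of_mem (fun i => Mred (I₁.erase i) J₁) (hib b hb)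
        · right
          obtain ⟨k, hk, rfl⟩ := Finset.mem_image.1 he
          have hk' : k ∉ J₁ := fun h => (Finset.mem_compl.1 hk) (Finset.mem_insert_of_mem h)
          exact ⟨k, Finset.mem_compl.2 hk', by simp⟩
    · rintro (he | he)
      · obtain ⟨⟨a, c⟩, hac, rfl⟩ := Finset.mem_image.1 he
        obtain ⟨i, hi, hmem⟩ := Finset.mem_biUnion.1 hac
        refine ⟨Sum.inl i, mem_inl_reduceSigma.2 hi, ?_⟩
        rw [h1 i hi]
        exact Finset.mem_union_left _ (Finset.mem_image_of_mem _ hmem)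
      · obtain ⟨b, hbc, hmem⟩ := he
        have hb : b ∉ J₁ := Finset.mem_compl.1 hbc
        rcases Finset.mem_insert.1 hmem with rfl | hmem
        · refine ⟨Sum.inr b, mem_inr_reduceSigma.2 hb, ?_⟩
          rw [h2 b hb, hliftins]
          exact Finset.mem_union_left _ (Finset.mem_insert_self _ _)
        · rw [Finset.mem_singleton] at hmem
          subst hmem
          obtain ⟨i₀, hi₀⟩ := hI₁ne
          refine ⟨Sum.inl i₀, mem_inl_reduceSigma.2 hi₀, ?_⟩
          rw [h1 i₀ hi₀]
          exact Finset.mem_union_right _ (Finset.mem_image_of_mem _ (Finset.mem_compl.2 hb))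
  have hUredges : ∀ e ∈ Ur, e.1 ∈ I₁ ∧ e.2 ∈ J₁ := by
    intro e he
    obtain ⟨i, hi, hmem⟩ := Finset.mem_biUnion.1 he
    obtain ⟨h1e, h2e⟩ := hedges i hi e hmem
    exact ⟨Finset.mem_of_mem_erase h1e, h2e⟩
  have hWedges : ∀ e ∈ liftB (Sum.inl : Fin n → Fin n ⊕ Fin d) Ur,
      e.1 ∈ I₁.image (Sum.inl : Fin n → Fin n ⊕ Fin d) ∧ e.2 ∈ J₁ := by
    intro e he
    obtain ⟨e₀, he₀, rfl⟩ := Finset.mem_image.1 he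
    exact ⟨Finset.mem_image_of_mem _ (hUredges e₀ he₀).1, (hUredges e₀ he₀).2⟩
  obtain ⟨hpT, hpRD⟩ := isTreeOn_pendants (U := liftB (Sum.inl : Fin n → Fin n ⊕ Fin d) Ur)
      (I := I₁.image (Sum.inl : Fin n → Fin n ⊕ Fin d))
      (J := J₁) J₁ᶜ (fun b => Sum.inl (ib b)) (fun b => Sum.inr b)
      hWedges (fun b hb => Finset.mem_compl.1 hb)
      (fun b hb => Finset.mem_image_of_mem _ (hib b (Finset.mem_compl.1 hb)))
      (fun b _ => by simp)
      (fun b _ b' _ h => Sum.inr_injective h)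
  have hτset : τ = I₁.image (Sum.inl : Fin n → Fin n ⊕ Fin d) ∪
      J₁ᶜ.image (fun b => (Sum.inr b : Fin n ⊕ Fin d)) := rfl
  have huniv : (Finset.univ : Finset (Fin d)) = J₁ ∪ J₁ᶜ := (Finset.union_compl J₁).symm
  constructor
  · rintro ⟨hT, hRD⟩
    rw [hUf] at hT hRD
    constructor
    · rw [hτset, huniv] at hT
      exact (isTreeOn_liftB (f := (Sum.inl : Fin n → Fin n ⊕ Fin d)) Sum.inl_injective).1 (hpT.1 hT)
    · intro j hj
      have hh := hRD j
      rw [hpRD j, if_neg (by simp [hj])] at hh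
      rw [← RD_liftB (f := (Sum.inl : Fin n → Fin n ⊕ Fin d)) Sum.inl_injective (U := Ur) j]
      exact hh
  · rintro ⟨hT, hRD⟩
    constructor
    · rw [hUf, hτset, huniv]
      exact hpT.2 ((isTreeOn_liftB (f := (Sum.inl : Fin n → Fin n ⊕ Fin d)) Sum.inl_injective).2 hT)
    · intro j
      rw [hUf, hpRD j]
      by_cases hj : j ∈ J₁
      · rw [if_neg (by simp [hj]), RD_liftB (f := (Sum.inl : Fin n → Fin n ⊕ Fin d)) Sum.inl_injective]
        exact hRD j hj
      · rw [if_pos (by simpa using hj)]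

end CoreLinkage

section Final

variable {n d : ℕ}

/-- The reduction map. -/
def red (F : PointedMF n d) : LeftSemiEnsemble n d where
  M := fun I J => redM F I J
  matching := fun _ _ h => redM_matching h
  junk := fun _ _ h => redM_junk h
  closure := fun I J I' J' N hIJ hI' hJ' hsub hm => redM_closure I J I' J' N hIJ hI' hJ' hsub hm
  leftLinkage := fun I J hIJ => by
    classical
    have hτcard : (reduceSigma I J).card = d + 1 := by
      rw [card_reduceSigma]
      have h1 : J.card ≤ d := J_card_le
      omega
    have hIne : I.Nonempty := Finset.card_pos.1 (by omega)
    set ib : Fin d → Fin n := fun b =>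
      if h : ∃ a, (a, b) ∈ redM F I (insert b J) then h.choose else hIne.choose with hibdef
    have hibspec : ∀ b, b ∉ J → (ib b, b) ∈ redM F I (insert b J) := by
      intro b hb
      have hcards : I.card = (insert b J).card := by
        rw [Finset.card_insert_of_notMem hb, hIJ]
      obtain ⟨a, ha, _⟩ := (redM_matching hcards).2.2 b (Finset.mem_insert_self _ _)
      have hex : ∃ a, (a, b) ∈ redM F I (insert b J) := ⟨a, ha⟩
      rw [hibdef]
      simp only [dif_pos hex]
      exact hex.choose_spec
    have hib : ∀ b, b ∉ J → ib b ∈ I := fun b hb =>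
      ((redM_matching (by rw [Finset.card_insert_of_notMem hb, hIJ])).1 _ (hibspec b hb)).1
    have hsplit : ∀ b, b ∉ J → redM F I (insert b J) =
        insert (ib b, b) (redM F (I.erase (ib b)) J) := by
      intro b hb
      have hcards : I.card = (insert b J).card := by
        rw [Finset.card_insert_of_notMem hb, hIJ]
      have hswap := redM_swap hcards (hibspec b hb)
      rw [Finset.erase_insert hb] at hswap
      rw [hswap, Finset.insert_erase (hibspec b hb)]
    have hdecomp : ∀ I' J', I'.card = J'.card → F.M (reduceSigma I' J') =
        liftB Sum.inl (redM F I' J') ∪ J'ᶜ.image (fun k => (Sum.inr k, k)) :=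
      fun I' J' h => M_decomp h
    have hedges : ∀ i ∈ I, ∀ e ∈ redM F (I.erase i) J, e.1 ∈ I.erase i ∧ e.2 ∈ J := by
      intro i hi e he
      exact (redM_matching (by rw [Finset.card_erase_of_mem hi, hIJ]; omega)).1 e he
    have hcore := core_linkage F.M (redM F) I J hIJ ib hib hdecomp hsplit hedges
    exact hcore.1 (F.linkage _ hτcard)

lemma PointedMF.ext' {F G : PointedMF n d} (h : F.M = G.M) : F = G := by
  cases F; cases G; cases h; rfl

lemma LeftSemiEnsemble.ext' {A B : LeftSemiEnsemble n d} (h : A.M = B.M) : A = B := by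
  cases A; cases B; cases h; rfl

lemma red_injective : Function.Injective (red : PointedMF n d → LeftSemiEnsemble n d) := by
  intro F G h
  apply PointedMF.ext'
  funext σ
  by_cases hσ : σ.card = d
  · have hIJ : (sigI σ).card = (sigJ σ).card := sig_card_eq hσ
    have hMred : redM F (sigI σ) (sigJ σ) = redM G (sigI σ) (sigJ σ) :=
      congrArg (fun L : LeftSemiEnsemble n d => L.M (sigI σ) (sigJ σ)) h
    have h1 := M_decomp (F := F) hIJ
    have h2 := M_decomp (F := G) hIJ
    rw [reduceSigma_sig] at h1 h2
    rw [h1, h2, hMred]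
  · rw [F.junk σ hσ, G.junk σ hσ]

/-- Inverse construction: the matching field attached to a left-semi-ensemble. -/
def unred (L : LeftSemiEnsemble n d) (σ : Finset (Fin n ⊕ Fin d)) :
    BGraph (Fin n ⊕ Fin d) (Fin d) :=
  if σ.card = d then
    liftB Sum.inl (L.M (sigI σ) (sigJ σ)) ∪ (sigJ σ)ᶜ.image (fun k => (Sum.inr k, k))
  else ∅

lemma unred_reduce (L : LeftSemiEnsemble n d) {I : Finset (Fin n)} {J : Finset (Fin d)}
    (h : I.card = J.card) :
    unred L (reduceSigma I J) =
      liftB Sum.inl (L.M I J) ∪ Jᶜ.image (fun k => (Sum.inr k, k)) := by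
  rw [unred, if_pos (card_reduceSigma_eq h), sigI_reduce, sigJ_reduce]

lemma decomp_matching {I : Finset (Fin n)} {J : Finset (Fin d)} {W : BGraph (Fin n) (Fin d)}
    (hW : IsMatching W I J) :
    IsMatching (liftB Sum.inl W ∪ Jᶜ.image (fun k => (Sum.inr k, k)))
      (reduceSigma I J) Finset.univ := by
  obtain ⟨hedge, hleft, hright⟩ := hW
  refine ⟨?_, ?_, ?_⟩
  · intro e he
    rcases Finset.mem_union.1 he with he | he
    · obtain ⟨⟨a, c⟩, hac, rfl⟩ := Finset.mem_image.1 he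
      exact ⟨mem_inl_reduceSigma.2 (hedge _ hac).1, Finset.mem_univ _⟩
    · obtain ⟨k, hk, rfl⟩ := Finset.mem_image.1 he
      exact ⟨mem_inr_reduceSigma.2 (Finset.mem_compl.1 hk), Finset.mem_univ _⟩
  · intro x hx
    cases x with
    | inl a =>
      have haI : a ∈ I := mem_inl_reduceSigma.1 hx
      obtain ⟨b, hb, hub⟩ := hleft a haI
      refine ⟨b, Finset.mem_union_left _ (mem_liftB.2 ⟨a, hb, rfl⟩), ?_⟩
      intro y hy
      rcases Finset.mem_union.1 hy with hy | hy
      · obtain ⟨a', ha', heq⟩ := mem_liftB.1 hy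
        rw [Sum.inl_injective heq] at ha'
        exact hub y ha'
      · exfalso
        obtain ⟨k, _, hk⟩ := Finset.mem_image.1 hy
        rw [Prod.mk.injEq] at hk
        exact Sum.inr_ne_inl hk.1
    | inr k =>
      have hkJ : k ∉ J := mem_inr_reduceSigma.1 hx
      refine ⟨k, Finset.mem_union_right _
        (Finset.mem_image_of_mem _ (Finset.mem_compl.2 hkJ)), ?_⟩
      intro y hy
      rcases Finset.mem_union.1 hy with hy | hy
      · exfalso
        obtain ⟨a', _, heq⟩ := mem_liftB.1 hy
        exact Sum.inl_ne_inr heq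
      · obtain ⟨k', _, hk'⟩ := Finset.mem_image.1 hy
        rw [Prod.mk.injEq] at hk'
        rw [← hk'.2, Sum.inr_injective hk'.1]
  · intro b _
    by_cases hbJ : b ∈ J
    · obtain ⟨a, ha, hua⟩ := hright b hbJ
      refine ⟨Sum.inl a, Finset.mem_union_left _ (mem_liftB.2 ⟨a, ha, rfl⟩), ?_⟩
      intro y hy
      rcases Finset.mem_union.1 hy with hy | hy
      · obtain ⟨⟨a', c⟩, hac, heq⟩ := Finset.mem_image.1 hy
        rw [Prod.mk.injEq] at heq
        rw [← heq.1]
        rw [show c = b from heq.2] at hac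
        exact congrArg Sum.inl (hua a' hac)
      · exfalso
        obtain ⟨k, hk, hkeq⟩ := Finset.mem_image.1 hy
        rw [Prod.mk.injEq] at hkeq
        rw [hkeq.2] at hk
        exact (Finset.mem_compl.1 hk) hbJ
    · refine ⟨Sum.inr b, Finset.mem_union_right _
        (Finset.mem_image_of_mem _ (Finset.mem_compl.2 hbJ)), ?_⟩
      intro y hy
      rcases Finset.mem_union.1 hy with hy | hy
      · exfalso
        obtain ⟨⟨a', c⟩, hac, heq⟩ := Finset.mem_image.1 hy
        rw [Prod.mk.injEq] at heq
        rw [show c = b from heq.2] at hac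
        exact hbJ (hedge _ hac).2
      · obtain ⟨k, _, hkeq⟩ := Finset.mem_image.1 hy
        rw [Prod.mk.injEq] at hkeq
        rw [← hkeq.1, hkeq.2]

/-- The matching field attached to a left-semi-ensemble. -/
def unredF (L : LeftSemiEnsemble n d) : PointedMF n d where
  M := unred L
  matching := by
    intro σ hσ
    have h := decomp_matching (L.matching (sigI σ) (sigJ σ) (sig_card_eq hσ))
    rw [reduceSigma_sig] at h
    rw [unred, if_pos hσ]
    exact h
  junk := fun σ hσ => by rw [unred, if_neg hσ]
  pointed := by
    intro σ hσ j hj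
    rw [unred, if_pos hσ]
    refine Finset.mem_union_right _ (Finset.mem_image_of_mem _ ?_)
    rw [Finset.mem_compl]
    intro hc
    rw [sigJ, Finset.mem_filter] at hc
    exact hc.2 hj
  linkage := by
    classical
    intro τ hτ
    have hIJ : (sigI τ).card = (sigJ τ).card + 1 := sig_card_succ hτ
    have hIne : (sigI τ).Nonempty := Finset.card_pos.1 (by omega)
    set I₁ := sigI τ with hI₁
    set J₁ := sigJ τ with hJ₁
    set ib : Fin d → Fin n := fun b =>
      if h : ∃ a, (a, b) ∈ L.M I₁ (insert b J₁) then h.choose else hIne.choose with hibdef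
    have hibspec : ∀ b, b ∉ J₁ → (ib b, b) ∈ L.M I₁ (insert b J₁) := by
      intro b hb
      have hcards : I₁.card = (insert b J₁).card := by
        rw [Finset.card_insert_of_notMem hb, hIJ]
      obtain ⟨a, ha, _⟩ := (L.matching _ _ hcards).2.2 b (Finset.mem_insert_self _ _)
      have hex : ∃ a, (a, b) ∈ L.M I₁ (insert b J₁) := ⟨a, ha⟩
      rw [hibdef]
      simp only [dif_pos hex]
      exact hex.choose_spec
    have hib : ∀ b, b ∉ J₁ → ib b ∈ I₁ := by
      intro b hb
      have hcards : I₁.card = (insert b J₁).card := by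
        rw [Finset.card_insert_of_notMem hb, hIJ]
      exact ((L.matching _ _ hcards).1 _ (hibspec b hb)).1
    have hsplit : ∀ b, b ∉ J₁ → L.M I₁ (insert b J₁) =
        insert (ib b, b) (L.M (I₁.erase (ib b)) J₁) := by
      intro b hb
      have hcards : I₁.card = (insert b J₁).card := by
        rw [Finset.card_insert_of_notMem hb, hIJ]
      have hN := matching_erase (L.matching _ _ hcards) (hibspec b hb)
      rw [Finset.erase_insert hb] at hN
      have hcl := L.closure I₁ (insert b J₁) (I₁.erase (ib b)) J₁
        ((L.M I₁ (insert b J₁)).erase (ib b, b)) hcards (Finset.erase_subset _ _)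
        (Finset.subset_insert _ _) (Finset.erase_subset _ _) hN
      rw [← hcl, Finset.insert_erase (hibspec b hb)]
    have hedges : ∀ i ∈ I₁, ∀ e ∈ L.M (I₁.erase i) J₁, e.1 ∈ I₁.erase i ∧ e.2 ∈ J₁ := by
      intro i hi e he
      refine (L.matching _ _ ?_).1 e he
      rw [Finset.card_erase_of_mem hi, hIJ]
      omega
    have hdecomp : ∀ I J, I.card = J.card → unred L (reduceSigma I J) =
        liftB Sum.inl (L.M I J) ∪ Jᶜ.image (fun k => (Sum.inr k, k)) :=
      fun I J h => unred_reduce L h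
    have hcore := core_linkage (unred L) L.M I₁ J₁ hIJ ib hib hdecomp hsplit hedges
    have hleft := L.leftLinkage I₁ J₁ hIJ
    have hgoal := hcore.2 ⟨hleft.1, hleft.2⟩
    rw [show reduceSigma I₁ J₁ = τ from reduceSigma_sig τ] at hgoal
    exact hgoal

lemma red_unredF (L : LeftSemiEnsemble n d) : red (unredF L) = L := by
  apply LeftSemiEnsemble.ext'
  funext I J
  show redM (unredF L) I J = L.M I J
  by_cases h : I.card = J.card
  · ext ⟨i, j⟩
    rw [mem_redM]
    show (Sum.inl i, j) ∈ unred L (reduceSigma I J) ↔ _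
    rw [unred_reduce L h, Finset.mem_union]
    constructor
    · rintro (hm | hm)
      · obtain ⟨a, ha, heq⟩ := mem_liftB.1 hm
        rwa [← Sum.inl_injective heq]
      · exfalso
        obtain ⟨k, _, hk⟩ := Finset.mem_image.1 hm
        rw [Prod.mk.injEq] at hk
        exact Sum.inr_ne_inl hk.1
    · intro hm
      exact Or.inl (mem_liftB.2 ⟨i, hm, rfl⟩)
  · rw [redM_junk h, L.junk I J h]

lemma red_surjective : Function.Surjective (red : PointedMF n d → LeftSemiEnsemble n d) :=
  fun L => ⟨unredF L, red_unredF L⟩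

end Final

end MFRed

theorem statement2 (n d : ℕ) :
    ∃ red : PointedMF n d → LeftSemiEnsemble n d,
      (∀ (F : PointedMF n d) (I : Finset (Fin n)) (J : Finset (Fin d)),
        (red F).M I J = Finset.univ.filter fun e : Fin n × Fin d =>
          (Sum.inl e.1, e.2) ∈ F.M (reduceSigma I J)) ∧
      Function.Bijective red := by
  exact ⟨MFRed.red, fun F I J => rfl, MFRed.red_injective, MFRed.red_surjective⟩
end

section
/- Let 𝓜 be an (n,d)-matching ensemble and let 𝒯 = {T_v} be an extended (n,d)-tope arrangement each of whose topes is compatible with every matching of 𝓜 (such a 𝒯 exists and is unique, being obtained from 𝓜 by iterated amalgamation). Then for every lattice point w of (n+1)Δ^{d−1}, the union ⋃_{j̄ ∈ supp(w)} T_{w−e_j̄}, where supp(w) = {j̄ ∈ [d̄] : w_j̄ ≥ 1}, is a tree on the vertex set [n] ⊔ supp(w) in which every vertex of [n] has degree 1 or 2. -/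
open Finset

/-- Support of a vector. -/
def suppF {d : ℕ} (w : Fin d → ℕ) : Finset (Fin d) :=
  Finset.univ.filter fun j => 1 ≤ w j

/-- The union of the topes at the vertices of the upside-down simplex `w + ∇^{d-1}`. -/
def nablaUnion {n d : ℕ} (T : (Fin d → ℕ) → Fin n → Fin d) (w : Fin d → ℕ) :
    BGraph (Fin n) (Fin d) :=
  (suppF w).biUnion fun j => topeGraph (T (w - unitVec j))

/-- An `(n,d)`-matching ensemble (as a normalized matching stack). -/
structure MatchingEnsemble (n d : ℕ) where
  M : Finset (Fin n) → Finset (Fin d) → BGraph (Fin n) (Fin d)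
  matching : ∀ I J, I.card = J.card → IsMatching (M I J) I J
  junk : ∀ I J, I.card ≠ J.card → M I J = ∅
  closure : ∀ (I : Finset (Fin n)) (J : Finset (Fin d)) (I' : Finset (Fin n))
    (J' : Finset (Fin d)) (N : BGraph (Fin n) (Fin d)), I.card = J.card → I' ⊆ I → J' ⊆ J →
    N ⊆ M I J → IsMatching N I' J' → N = M I' J'
  leftLinkage : ∀ (I : Finset (Fin n)) (J : Finset (Fin d)), I.card = J.card + 1 →
    IsTreeOn (I.biUnion fun i => M (I.erase i) J) I J ∧
      ∀ j ∈ J, RD (I.biUnion fun i => M (I.erase i) J) j = 2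
  rightLinkage : ∀ (I : Finset (Fin n)) (J : Finset (Fin d)), I.card + 1 = J.card →
    IsTreeOn (J.biUnion fun j => M I (J.erase j)) I J ∧
      ∀ i ∈ I, LD (J.biUnion fun j => M I (J.erase j)) i = 2


-- ========================= auxiliary lemmas =========================
set_option linter.unusedSectionVars false
set_option maxHeartbeats 1000000

section AuxGraph
variable {α β : Type*} [DecidableEq α] [DecidableEq β]

lemma toGraph_adj (U : BGraph α β) (x y : α ⊕ β) :
    (toGraph U).Adj x y ↔
      ∃ a b, (a, b) ∈ U ∧ ((x = Sum.inl a ∧ y = Sum.inr b) ∨ (x = Sum.inr b ∧ y = Sum.inl a)) := by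
  simp only [toGraph, SimpleGraph.fromRel_adj]
  constructor
  · rintro ⟨hne, ⟨a, b, hx, hy, hm⟩ | ⟨a, b, hy, hx, hm⟩⟩
    · exact ⟨a, b, hm, Or.inl ⟨hx, hy⟩⟩
    · exact ⟨a, b, hm, Or.inr ⟨hx, hy⟩⟩
  · rintro ⟨a, b, hm, ⟨hx, hy⟩ | ⟨hx, hy⟩⟩
    · subst hx; subst hy; exact ⟨by simp, Or.inl ⟨a, b, rfl, rfl, hm⟩⟩
    · subst hx; subst hy; exact ⟨by simp, Or.inr ⟨a, b, rfl, rfl, hm⟩⟩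

lemma toGraph_mono {U V : BGraph α β} (h : U ⊆ V) : toGraph U ≤ toGraph V := by
  intro x y hxy
  rw [toGraph_adj] at hxy ⊢
  obtain ⟨a, b, hm, hor⟩ := hxy
  exact ⟨a, b, h hm, hor⟩

lemma pendant_nbr {U : BGraph α β} {i₀ : α} {c : β}
    (hU : ∀ e ∈ U, e.1 ≠ i₀) {y : α ⊕ β}
    (h : (toGraph (insert (i₀, c) U)).Adj (Sum.inl i₀) y) : y = Sum.inr c := by
  rw [toGraph_adj] at h
  obtain ⟨a, b, hm, ⟨hx, hy⟩ | ⟨hx, hy⟩⟩ := h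
  · rcases mem_insert.1 hm with he | he
    · rw [hy, (Prod.mk.injEq _ _ _ _ ▸ he : a = i₀ ∧ b = c).2]
    · exact absurd (Sum.inl.inj hx).symm (hU _ he)
  · exact absurd hx (by simp)

lemma pendant_acyclic {U : BGraph α β} {i₀ : α} {c : β}
    (hU : ∀ e ∈ U, e.1 ≠ i₀) (hac : (toGraph U).IsAcyclic) :
    (toGraph (insert (i₀, c) U)).IsAcyclic := by
  intro v p hp
  classical
  rcases Classical.em (Sum.inl i₀ ∈ p.support) with hv | hv
  · have hex : ∃ q : (toGraph (insert (i₀, c) U)).Walk (Sum.inl i₀) (Sum.inl i₀), q.IsCycle :=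
      ⟨p.rotate _ hv, hp.rotate hv⟩
    obtain ⟨q, hq⟩ := hex
    cases q with
    | nil => exact hq.ne_nil rfl
    | cons h q' =>
      rename_i u
      have hu : u = Sum.inr c := pendant_nbr hU h
      subst hu
      obtain ⟨x, r, h', heq⟩ := SimpleGraph.Walk.exists_cons_eq_concat h q'
      have hx : x = Sum.inr c := pendant_nbr hU h'.symm
      subst hx
      have hedges : ((SimpleGraph.Walk.cons h q').edges : List _) =
          r.edges ++ [s(Sum.inr c, Sum.inl i₀)] := by
        rw [heq, SimpleGraph.Walk.edges_concat, List.concat_eq_append]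
      have hnodup := hq.edges_nodup
      rw [SimpleGraph.Walk.edges_cons] at hedges hnodup
      have hsym : s(Sum.inr c, Sum.inl i₀) = s(Sum.inl i₀, (Sum.inr c : α ⊕ β)) := Sym2.eq_swap
      rw [hsym] at hedges
      cases hre : r.edges with
      | nil =>
        rw [hre] at hedges
        simp at hedges
        have h3 := hq.three_le_length
        have hlen : (SimpleGraph.Walk.cons h q').length = q'.length + 1 := by simp
        have hq'len : q'.edges.length = q'.length := SimpleGraph.Walk.length_edges q'
        have h0 := SimpleGraph.Walk.Nil.length_eq_zero hedges
        simp at hq'len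
        omega
      | cons a rest =>
        rw [hre, List.cons_append] at hedges
        obtain ⟨h1, h2⟩ := List.cons_eq_cons.1 hedges
        have hmem : s(Sum.inl i₀, (Sum.inr c : α ⊕ β)) ∈ q'.edges := by
          rw [h2]; simp
        exact (List.nodup_cons.1 hnodup).1 hmem
  · have hsub : ∀ e ∈ p.edges, e ∈ (toGraph U).edgeSet := by
      intro e he
      induction e using Sym2.ind with
      | _ x y =>
        have hadj := p.adj_of_mem_edges he
        have hxs := p.fst_mem_support_of_mem_edges he
        have hys := p.snd_mem_support_of_mem_edges he
        rw [SimpleGraph.mem_edgeSet, toGraph_adj]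
        rw [toGraph_adj] at hadj
        obtain ⟨a, b, hm, hor⟩ := hadj
        refine ⟨a, b, ?_, hor⟩
        rcases mem_insert.1 hm with hm | hm
        · exfalso
          simp only [Prod.mk.injEq] at hm
          obtain ⟨ha, hb⟩ := hm
          subst ha
          rcases hor with ⟨hx, _⟩ | ⟨_, hy⟩
          · exact hv (hx ▸ hxs)
          · exact hv (hy ▸ hys)
        · exact hm
    exact hac (p.transfer _ hsub) (hp.transfer hsub)

lemma isTreeOn_insert {U : BGraph α β} {I : Finset α} {J : Finset β}
    {i₀ : α} {c : β} (hi₀ : i₀ ∉ I) (hc : c ∈ J) (hU : IsTreeOn U I J) :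
    IsTreeOn (insert (i₀, c) U) (insert i₀ I) J := by
  obtain ⟨hedge, hac, hreach⟩ := hU
  have hno : ∀ e ∈ U, e.1 ≠ i₀ := fun e he h => hi₀ (h ▸ (hedge e he).1)
  have hle : toGraph U ≤ toGraph (insert (i₀, c) U) := toGraph_mono (subset_insert _ _)
  have hadj : (toGraph (insert (i₀, c) U)).Adj (Sum.inl i₀) (Sum.inr c) := by
    rw [toGraph_adj]
    exact ⟨i₀, c, mem_insert_self _ _, Or.inl ⟨rfl, rfl⟩⟩
  refine ⟨?_, pendant_acyclic hno hac, ?_⟩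
  · intro e he
    rcases mem_insert.1 he with he | he
    · subst he; exact ⟨mem_insert_self _ _, hc⟩
    · exact ⟨mem_insert_of_mem (hedge e he).1, (hedge e he).2⟩
  · have key : ∀ x : α ⊕ β, Sum.elim (· ∈ insert i₀ I) (· ∈ J) x →
        (toGraph (insert (i₀, c) U)).Reachable x (Sum.inr c) := by
      intro x hx
      cases x with
      | inl a =>
        rcases mem_insert.1 hx with ha | ha
        · subst ha; exact hadj.reachable
        · exact ((hreach (Sum.inl a) (Sum.inr c) ha hc).mono hle)
      | inr b => exact ((hreach (Sum.inr b) (Sum.inr c) hx hc).mono hle)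
    intro x y hx hy
    exact (key x hx).trans (key y hy).symm

lemma LD_insert_self {U : BGraph α β} {i₀ : α} {c : β}
    (hno : ∀ e ∈ U, e.1 ≠ i₀) : LD (insert (i₀, c) U) i₀ = 1 := by
  unfold LD
  have : (insert (i₀, c) U).filter (fun e => e.1 = i₀) = {(i₀, c)} := by
    ext e
    simp only [mem_filter, mem_insert, mem_singleton]
    constructor
    · rintro ⟨he | he, h1⟩
      · exact he
      · exact absurd h1 (hno e he)
    · rintro rfl; exact ⟨Or.inl rfl, rfl⟩
  rw [this, card_singleton]

lemma LD_insert_ne {U : BGraph α β} {i₀ : α} {c : β} {i : α} (h : i ≠ i₀) :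
    LD (insert (i₀, c) U) i = LD U i := by
  unfold LD
  congr 1
  ext e
  simp only [mem_filter, mem_insert]
  constructor
  · rintro ⟨he | he, h1⟩
    · exact absurd (h1 ▸ congrArg Prod.fst he : i = i₀) h
    · exact ⟨he, h1⟩
  · rintro ⟨he, h1⟩; exact ⟨Or.inr he, h1⟩

lemma compatible_mono {G G' H H' : BGraph α β} (h : Compatible G G')
    (hG : H ⊆ G) (hG' : H' ⊆ G') : Compatible H H' :=
  fun I J M M' hM hM' h1 h2 => h I J M M' (hM.trans hG) (hM'.trans hG') h1 h2

end AuxGraph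

section AuxRest
variable {n d : ℕ}

/-- The graph of a function restricted to a subset. -/
def restGraph (I : Finset (Fin n)) (f : Fin n → Fin d) : BGraph (Fin n) (Fin d) :=
  I.image fun i => (i, f i)

lemma mem_restGraph {I : Finset (Fin n)} {f : Fin n → Fin d} {e : Fin n × Fin d} :
    e ∈ restGraph I f ↔ e.1 ∈ I ∧ f e.1 = e.2 := by
  simp only [restGraph, mem_image]
  constructor
  · rintro ⟨i, hi, rfl⟩; exact ⟨hi, rfl⟩
  · rintro ⟨h1, h2⟩
    exact ⟨e.1, h1, by rw [h2]⟩

lemma restGraph_mono {I I' : Finset (Fin n)} (h : I' ⊆ I) (f : Fin n → Fin d) :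
    restGraph I' f ⊆ restGraph I f := by
  intro e he
  rw [mem_restGraph] at he ⊢
  exact ⟨h he.1, he.2⟩

lemma restGraph_univ (f : Fin n → Fin d) : restGraph univ f = topeGraph f := rfl

lemma isMatching_restGraph {I : Finset (Fin n)} {f : Fin n → Fin d}
    (hinj : Set.InjOn f I) : IsMatching (restGraph I f) I (I.image f) := by
  refine ⟨?_, ?_, ?_⟩
  · intro e he
    rw [mem_restGraph] at he
    exact ⟨he.1, mem_image.2 ⟨e.1, he.1, he.2⟩⟩
  · intro a ha
    refine ⟨f a, mem_restGraph.2 ⟨ha, rfl⟩, ?_⟩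
    intro b hb
    rw [mem_restGraph] at hb
    exact hb.2.symm
  · intro b hb
    obtain ⟨a, ha, rfl⟩ := mem_image.1 hb
    refine ⟨a, mem_restGraph.2 ⟨ha, rfl⟩, ?_⟩
    intro a' ha'
    rw [mem_restGraph] at ha'
    exact hinj ha'.1 ha ha'.2

/-- Derive a contradiction from two injective functions with the same image on `Q`
which disagree somewhere on `Q`, given compatibility. -/
lemma compat_contra {I Q : Finset (Fin n)} {t t' : Fin n → Fin d}
    (hcomp : Compatible (restGraph I t) (restGraph I t')) (hQI : Q ⊆ I)
    (hinjt : Set.InjOn t Q) (hinjt' : Set.InjOn t' Q)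
    (him : Q.image t = Q.image t') {i : Fin n} (hiQ : i ∈ Q) (hne : t i ≠ t' i) : False := by
  have h1 := isMatching_restGraph hinjt
  have h2 := isMatching_restGraph hinjt'
  rw [← him] at h2
  have := hcomp Q (Q.image t) (restGraph Q t) (restGraph Q t')
    (restGraph_mono hQI t) (restGraph_mono hQI t') h1 h2
  have hmem : (i, t i) ∈ restGraph Q t' := this ▸ mem_restGraph.2 ⟨hiQ, rfl⟩
  exact hne (mem_restGraph.1 hmem).2.symm

end AuxRest


section KeyLemma
lemma keyLemma {n d : ℕ} {I : Finset (Fin n)} {t t' : Fin n → Fin d} {c : Fin d}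
    (hcomp : Compatible (restGraph I t) (restGraph I t'))
    (hc : (I.filter fun i => t' i = c).card = (I.filter fun i => t i = c).card + 1)
    (hy : ∀ y, y ≠ c → (I.filter fun i => t' i = y).card ≤ (I.filter fun i => t i = y).card)
    {i₀ : Fin n} (hi₀ : i₀ ∈ I) (ht : t i₀ = c) : t' i₀ = c := by
  by_contra hne
  classical
  set Ch : ℕ → (ℕ → Fin n) → Prop := fun m f =>
    (∀ p, p ≤ m → f p ∈ I) ∧
    (∀ p q, p ≤ m → q ≤ m → f p = f q → p = q) ∧
    f 0 = i₀ ∧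
    (∀ p, p < m → t (f (p+1)) = t' (f p)) ∧
    (∀ p, p ≤ m → t' (f p) ≠ c) ∧
    (∀ p q, p ≤ m → q ≤ m → t' (f p) = t' (f q) → p = q) with hCh
  set P : ℕ → Prop := fun m => ∃ f, Ch m f with hPdef
  have hP0 : P 0 := ⟨fun _ => i₀, fun p hp => hi₀, fun p q hp hq _ => by omega, rfl,
    fun p hp => by omega, fun p hp => hne, fun p q hp hq _ => by omega⟩
  have hbound : ∀ m f, Ch m f → m + 1 ≤ I.card := by
    intro m f hf
    have hsub : (Finset.range (m+1)).image f ⊆ I := by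
      intro x hx
      obtain ⟨p, hp, rfl⟩ := mem_image.1 hx
      exact hf.1 p (Nat.lt_succ_iff.1 (mem_range.1 hp))
    have hcard : ((Finset.range (m+1)).image f).card = m + 1 := by
      rw [Finset.card_image_of_injOn, card_range]
      intro p hp q hq hpq
      simp only [coe_range, Set.mem_Iio] at hp hq
      exact hf.2.1 p q (Nat.lt_succ_iff.1 hp) (Nat.lt_succ_iff.1 hq) hpq
    calc m + 1 = _ := hcard.symm
      _ ≤ I.card := card_le_card hsub
  set M := Nat.findGreatest P I.card with hMdef
  have hPM : P M := Nat.findGreatest_spec (Nat.zero_le _) hP0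
  obtain ⟨f, hfI, hfinj, hf0, hfalt, hfc, hft'inj⟩ := hPM
  obtain ⟨y, hy0⟩ : ∃ y, t' (f M) = y := ⟨_, rfl⟩
  have hyc : y ≠ c := hy0 ▸ hfc M le_rfl
  have htf0 : t (f 0) = c := by rw [hf0]; exact ht
  set A := I.filter (fun i => t i = y) with hA
  set B := I.filter (fun i => t i = y ∧ t' i = y) with hB
  have hAf : ∀ p, p ≤ M → f p ∉ A := by
    intro p hp hmem
    have hty : t (f p) = y := (mem_filter.1 hmem).2
    rcases Nat.eq_zero_or_pos p with rfl | hppos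
    · exact hyc (by rw [← hty]; exact htf0)
    · have halt : t (f ((p-1)+1)) = t' (f (p-1)) := hfalt (p-1) (by omega)
      rw [Nat.sub_add_cancel hppos] at halt
      have := hft'inj (p-1) M (by omega) le_rfl (by rw [← halt, hty, hy0])
      omega
  have hfMA' : f M ∈ I.filter (fun i => t' i = y) := mem_filter.2 ⟨hfI M le_rfl, hy0⟩
  have hfMB : f M ∉ B := by
    intro hmem
    have hty : t (f M) = y := ((mem_filter.1 hmem).2).1
    exact hAf M le_rfl (mem_filter.2 ⟨hfI M le_rfl, hty⟩)
  have hBA' : B ⊆ I.filter (fun i => t' i = y) := by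
    intro x hx; rw [mem_filter] at hx ⊢; exact ⟨hx.1, hx.2.2⟩
  have hcardA' : B.card + 1 ≤ (I.filter (fun i => t' i = y)).card := by
    have hsub : insert (f M) B ⊆ I.filter (fun i => t' i = y) := by
      intro x hx
      rcases mem_insert.1 hx with rfl | hx
      · exact hfMA'
      · exact hBA' hx
    calc B.card + 1 = (insert (f M) B).card := (card_insert_of_notMem hfMB).symm
      _ ≤ _ := card_le_card hsub
  have hBsubA : B ⊆ A := by
    intro x hx; rw [mem_filter] at hx ⊢; exact ⟨hx.1, hx.2.1⟩
  have hexists : ∃ ip, ip ∈ A ∧ ip ∉ B := by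
    by_contra hno
    push_neg at hno
    have h1 := card_le_card (fun x hx => hno x hx : A ⊆ B)
    have h2 := hy y hyc
    rw [← hA] at h2
    omega
  obtain ⟨ip, hipA, hipB⟩ := hexists
  have hipI : ip ∈ I := (mem_filter.1 hipA).1
  have hipt : t ip = y := (mem_filter.1 hipA).2
  have hipt' : t' ip ≠ y := fun h => hipB (mem_filter.2 ⟨hipI, hipt, h⟩)
  have hipnew : ∀ p, p ≤ M → f p ≠ ip := fun p hp h => hAf p hp (h ▸ hipA)
  -- characterization of t (f p)
  have htfp : ∀ p, 1 ≤ p → p ≤ M → t (f p) = t' (f (p-1)) := by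
    intro p h1 h2
    have halt := hfalt (p-1) (by omega)
    rwa [Nat.sub_add_cancel h1] at halt
  rcases Classical.em (t' ip = c) with hipc | hipc
  · -- case (a) : alternating path from c back to c
    set Q : Finset (Fin n) := insert ip ((Finset.range (M+1)).image f) with hQ
    have hmemQ : ∀ x, x ∈ Q ↔ x = ip ∨ ∃ p, p ≤ M ∧ f p = x := by
      intro x
      simp only [hQ, mem_insert, mem_image, mem_range, Nat.lt_succ_iff]
    have hQI : Q ⊆ I := by
      intro x hx
      rcases (hmemQ x).1 hx with rfl | ⟨p, hp, rfl⟩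
      · exact hipI
      · exact hfI p hp
    have hinjt : Set.InjOn t Q := by
      intro u hu v hv huv
      rcases (hmemQ u).1 hu with rfl | ⟨p, hp, rfl⟩ <;>
        rcases (hmemQ v).1 hv with h | ⟨q, hq, h⟩
      · exact h ▸ rfl
      · -- u = ip, v = f q : impossible
        exfalso
        rw [← h] at huv
        rw [hipt] at huv
        rcases Nat.eq_zero_or_pos q with rfl | hqpos
        · exact hyc (huv.trans htf0)
        · rw [htfp q hqpos hq, ← hy0] at huv
          have := hft'inj M (q-1) le_rfl (by omega) (hy0 ▸ huv)
          omega
      · exfalso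
        subst h
        rw [hipt] at huv
        rcases Nat.eq_zero_or_pos p with rfl | hppos
        · exact hyc (huv.symm.trans htf0)
        · rw [htfp p hppos hp] at huv
          have := hft'inj (p-1) M (by omega) le_rfl (huv.trans hy0.symm)
          omega
      · -- f p, f q
        rw [← h]; rw [← h] at huv
        rcases Nat.eq_zero_or_pos p with rfl | hppos <;>
          rcases Nat.eq_zero_or_pos q with rfl | hqpos
        · rfl
        · exfalso
          rw [htf0, htfp q hqpos hq] at huv
          exact hfc (q-1) (by omega) huv.symm
        · exfalso
          rw [htf0, htfp p hppos hp] at huv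
          exact hfc (p-1) (by omega) huv
        · rw [htfp p hppos hp, htfp q hqpos hq] at huv
          have := hft'inj (p-1) (q-1) (by omega) (by omega) huv
          have : p = q := by omega
          rw [this]
    have hinjt' : Set.InjOn t' Q := by
      intro u hu v hv huv
      rcases (hmemQ u).1 hu with rfl | ⟨p, hp, rfl⟩ <;>
        rcases (hmemQ v).1 hv with h | ⟨q, hq, h⟩
      · exact h ▸ rfl
      · exfalso; rw [← h, hipc] at huv; exact hfc q hq huv.symm
      · exfalso; subst h; rw [hipc] at huv; exact hfc p hp huv
      · rw [← h]; rw [← h] at huv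
        have := hft'inj p q hp hq huv
        rw [this]
    have him : Q.image t = Q.image t' := by
      ext z
      simp only [mem_image]
      constructor
      · rintro ⟨x, hx, rfl⟩
        rcases (hmemQ x).1 hx with rfl | ⟨p, hp, rfl⟩
        · exact ⟨f M, (hmemQ _).2 (Or.inr ⟨M, le_rfl, rfl⟩), by rw [hipt, hy0]⟩
        · rcases Nat.eq_zero_or_pos p with rfl | hppos
          · exact ⟨ip, (hmemQ _).2 (Or.inl rfl), by rw [hipc, htf0]⟩
          · exact ⟨f (p-1), (hmemQ _).2 (Or.inr ⟨p-1, by omega, rfl⟩),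
              by rw [htfp p hppos hp]⟩
      · rintro ⟨x, hx, rfl⟩
        rcases (hmemQ x).1 hx with rfl | ⟨p, hp, rfl⟩
        · exact ⟨f 0, (hmemQ _).2 (Or.inr ⟨0, Nat.zero_le _, rfl⟩), by rw [htf0, hipc]⟩
        · rcases Nat.lt_or_ge p M with hpM | hpM
          · exact ⟨f (p+1), (hmemQ _).2 (Or.inr ⟨p+1, by omega, rfl⟩),
              by rw [htfp (p+1) (by omega) (by omega)]; simp⟩
          · have : p = M := by omega
            subst this
            exact ⟨ip, (hmemQ _).2 (Or.inl rfl), by rw [hipt, ← hy0]⟩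
    exact compat_contra hcomp hQI hinjt hinjt' him ((hmemQ ip).2 (Or.inl rfl))
      (by rw [hipt, hipc]; exact hyc)
  rcases Classical.em (∃ p₀, p₀ ≤ M ∧ t' (f p₀) = t' ip) with ⟨p₀, hp₀M, hp₀⟩ | hfresh
  · -- case (b) : alternating cycle
    have hp₀M' : p₀ < M := by
      rcases Nat.lt_or_ge p₀ M with h | h
      · exact h
      · exfalso
        have : p₀ = M := by omega
        subst this
        exact hipt' (hp₀.symm.trans hy0)
    set Q : Finset (Fin n) := insert ip ((Finset.Ioc p₀ M).image f) with hQ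
    have hmemQ : ∀ x, x ∈ Q ↔ x = ip ∨ ∃ p, p₀ < p ∧ p ≤ M ∧ f p = x := by
      intro x
      simp only [hQ, mem_insert, mem_image, Finset.mem_Ioc]
      constructor
      · rintro (rfl | ⟨p, ⟨h1, h2⟩, rfl⟩)
        · exact Or.inl rfl
        · exact Or.inr ⟨p, h1, h2, rfl⟩
      · rintro (rfl | ⟨p, h1, h2, rfl⟩)
        · exact Or.inl rfl
        · exact Or.inr ⟨p, ⟨h1, h2⟩, rfl⟩
    have hQI : Q ⊆ I := by
      intro x hx
      rcases (hmemQ x).1 hx with rfl | ⟨p, h1, h2, rfl⟩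
      · exact hipI
      · exact hfI p h2
    have hinjt : Set.InjOn t Q := by
      intro u hu v hv huv
      rcases (hmemQ u).1 hu with rfl | ⟨p, hp1, hp2, rfl⟩ <;>
        rcases (hmemQ v).1 hv with h | ⟨q, hq1, hq2, h⟩
      · exact h ▸ rfl
      · exfalso
        rw [← h, hipt, htfp q (by omega) hq2] at huv
        have := hft'inj M (q-1) le_rfl (by omega) (hy0 ▸ huv)
        omega
      · exfalso
        subst h
        rw [hipt, htfp p (by omega) hp2] at huv
        have := hft'inj (p-1) M (by omega) le_rfl (huv.trans hy0.symm)
        omega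
      · rw [← h]; rw [← h] at huv
        rw [htfp p (by omega) hp2, htfp q (by omega) hq2] at huv
        have := hft'inj (p-1) (q-1) (by omega) (by omega) huv
        have : p = q := by omega
        rw [this]
    have hinjt' : Set.InjOn t' Q := by
      intro u hu v hv huv
      rcases (hmemQ u).1 hu with rfl | ⟨p, hp1, hp2, rfl⟩ <;>
        rcases (hmemQ v).1 hv with h | ⟨q, hq1, hq2, h⟩
      · exact h ▸ rfl
      · exfalso
        rw [← h, ← hp₀] at huv
        have := hft'inj p₀ q (by omega) hq2 huv
        omega
      · exfalso
        subst h
        rw [← hp₀] at huv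
        have := hft'inj p p₀ hp2 (by omega) huv
        omega
      · rw [← h]; rw [← h] at huv
        have := hft'inj p q hp2 hq2 huv
        rw [this]
    have him : Q.image t = Q.image t' := by
      ext z
      simp only [mem_image]
      constructor
      · rintro ⟨x, hx, rfl⟩
        rcases (hmemQ x).1 hx with rfl | ⟨p, hp1, hp2, rfl⟩
        · exact ⟨f M, (hmemQ _).2 (Or.inr ⟨M, by omega, le_rfl, rfl⟩), by rw [hipt, hy0]⟩
        · rcases Nat.lt_or_ge p₀ (p-1) with h | h
          · exact ⟨f (p-1), (hmemQ _).2 (Or.inr ⟨p-1, h, by omega, rfl⟩),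
              by rw [htfp p (by omega) hp2]⟩
          · have : p - 1 = p₀ := by omega
            exact ⟨ip, (hmemQ _).2 (Or.inl rfl),
              by rw [htfp p (by omega) hp2, this, hp₀]⟩
      · rintro ⟨x, hx, rfl⟩
        rcases (hmemQ x).1 hx with rfl | ⟨p, hp1, hp2, rfl⟩
        · exact ⟨f (p₀+1), (hmemQ _).2 (Or.inr ⟨p₀+1, by omega, by omega, rfl⟩),
            by rw [htfp (p₀+1) (by omega) (by omega)]; simp [hp₀]⟩
        · rcases Nat.lt_or_ge p M with h | h
          · exact ⟨f (p+1), (hmemQ _).2 (Or.inr ⟨p+1, by omega, by omega, rfl⟩),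
              by rw [htfp (p+1) (by omega) (by omega)]; simp⟩
          · have : p = M := by omega
            subst this
            exact ⟨ip, (hmemQ _).2 (Or.inl rfl), by rw [hipt, ← hy0]⟩
    refine compat_contra hcomp hQI hinjt hinjt' him
      ((hmemQ (f (p₀+1))).2 (Or.inr ⟨p₀+1, by omega, by omega, rfl⟩)) ?_
    rw [htfp (p₀+1) (by omega) (by omega)]
    simp only [Nat.add_sub_cancel]
    intro h
    have := hft'inj p₀ (p₀+1) (by omega) (by omega) h
    omega
  · -- case (c) : extend the chain
    push_neg at hfresh
    have hchain : Ch (M+1) (fun p => if p = M+1 then ip else f p) := by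
      refine ⟨?_, ?_, ?_, ?_, ?_, ?_⟩
      · intro p hp
        show (if p = M+1 then ip else f p) ∈ I
        by_cases h : p = M+1
        · rw [if_pos h]; exact hipI
        · rw [if_neg h]; exact hfI p (by omega)
      · intro p q hp hq hpq
        have hpq' : (if p = M+1 then ip else f p) = (if q = M+1 then ip else f q) := hpq
        by_cases h1 : p = M+1 <;> by_cases h2 : q = M+1
        · omega
        · rw [if_pos h1, if_neg h2] at hpq'
          exact absurd hpq'.symm (hipnew q (by omega))
        · rw [if_neg h1, if_pos h2] at hpq'
          exact absurd hpq' (hipnew p (by omega))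
        · rw [if_neg h1, if_neg h2] at hpq'
          exact hfinj p q (by omega) (by omega) hpq'
      · show (if (0:ℕ) = M+1 then ip else f 0) = i₀
        rw [if_neg (by omega : (0:ℕ) ≠ M+1)]; exact hf0
      · intro p hp
        show t (if p + 1 = M+1 then ip else f (p+1)) = t' (if p = M+1 then ip else f p)
        rw [if_neg (by omega : p ≠ M+1)]
        by_cases h : p + 1 = M + 1
        · have hpM : p = M := by omega
          rw [if_pos h, hipt, hpM, hy0]
        · rw [if_neg h]
          exact hfalt p (by omega)
      · intro p hp
        show t' (if p = M+1 then ip else f p) ≠ c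
        by_cases h : p = M+1
        · rw [if_pos h]; exact hipc
        · rw [if_neg h]; exact hfc p (by omega)
      · intro p q hp hq hpq
        have hpq' : t' (if p = M+1 then ip else f p) = t' (if q = M+1 then ip else f q) := hpq
        by_cases h1 : p = M+1 <;> by_cases h2 : q = M+1
        · omega
        · rw [if_pos h1, if_neg h2] at hpq'
          exact absurd hpq'.symm (hfresh q (by omega))
        · rw [if_neg h1, if_pos h2] at hpq'
          exact absurd hpq' (hfresh p (by omega))
        · rw [if_neg h1, if_neg h2] at hpq'
          exact hft'inj p q (by omega) (by omega) hpq'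
    have hb2 := hbound (M+1) _ hchain
    have hle : M + 1 ≤ M := Nat.le_findGreatest (by omega) ⟨_, hchain⟩
    omega

end KeyLemma

section Arith
variable {d : ℕ}

lemma mem_suppF {w : Fin d → ℕ} {j : Fin d} : j ∈ suppF w ↔ 1 ≤ w j := by
  simp [suppF]

lemma sub_unitVec_apply (w : Fin d → ℕ) (j y : Fin d) :
    (w - unitVec j) y = w y - (if y = j then 1 else 0) := rfl

lemma sum_sub_unitVec (w : Fin d → ℕ) (c : Fin d) (h : 1 ≤ w c) :
    (∑ y, (w - unitVec c) y) + 1 = ∑ y, w y := by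
  have hcong : ∑ y ∈ univ.erase c, (w - unitVec c) y = ∑ y ∈ univ.erase c, w y :=
    Finset.sum_congr rfl (fun y hy => by
      rw [sub_unitVec_apply, if_neg (mem_erase.1 hy).1, Nat.sub_zero])
  rw [← Finset.sum_erase_add univ _ (mem_univ c), ← Finset.sum_erase_add univ w (mem_univ c),
    hcong]
  have h2 : (w - unitVec c) c = w c - 1 := by rw [sub_unitVec_apply, if_pos rfl]
  omega

end Arith

section MainInduction

lemma lemmaG {n d : ℕ} (E : MatchingEnsemble n d) :
    ∀ (m : ℕ) (I : Finset (Fin n)) (w : Fin d → ℕ) (t : Fin d → Fin n → Fin d),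
    I.card = m →
    (∑ j, w j) = I.card + 1 →
    (∀ j, j ∈ suppF w → ∀ y, (I.filter fun i => t j i = y).card = (w - unitVec j) y) →
    (∀ j k, j ∈ suppF w → k ∈ suppF w → Compatible (restGraph I (t j)) (restGraph I (t k))) →
    (∀ j, j ∈ suppF w → ∀ I' J', I'.card = J'.card →
      Compatible (restGraph I (t j)) (E.M I' J')) →
    IsTreeOn ((suppF w).biUnion fun j => restGraph I (t j)) I (suppF w) ∧
      ∀ i ∈ I, 1 ≤ LD ((suppF w).biUnion fun j => restGraph I (t j)) i ∧
        LD ((suppF w).biUnion fun j => restGraph I (t j)) i ≤ 2 := by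
  intro m
  induction m using Nat.strong_induction_on with
  | _ m IH =>
  intro I w t hcard hsum hposn hcompat hEcompat
  classical
  by_cases hcase : ∀ y, w y ≤ 1
  · -- CASE 1 : w is a 0/1 vector, use right linkage directly
    have hwS : ∀ y ∈ suppF w, w y = 1 := by
      intro y hy
      have := mem_suppF.1 hy
      have := hcase y
      omega
    have hsum2 : ∑ j, w j = ∑ j ∈ suppF w, w j := by
      refine (Finset.sum_filter_of_ne ?_).symm
      intro y _ hne
      rw [mem_suppF.symm] at *
      simp only [suppF, mem_filter, mem_univ, true_and]
      omega
    have hcardS : (suppF w).card = I.card + 1 := by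
      have h3 : ∑ j ∈ suppF w, w j = (suppF w).card := by
        rw [Finset.sum_congr rfl hwS]
        simp
      omega
    have hinj : ∀ j, j ∈ suppF w → Set.InjOn (t j) I := by
      intro j hj i hi i' hi' heq
      by_contra hne
      have hsub : {i, i'} ⊆ I.filter (fun x => t j x = t j i') := by
        intro x hx
        rcases mem_insert.1 hx with rfl | hx
        · exact mem_filter.2 ⟨hi, heq⟩
        · rw [mem_singleton.1 hx]
          exact mem_filter.2 ⟨hi', rfl⟩
      have h2 := card_le_card hsub
      rw [card_insert_of_notMem (by simpa using hne), card_singleton] at h2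
      rw [hposn j hj (t j i'), sub_unitVec_apply] at h2
      have := hcase (t j i')
      omega
    have himage : ∀ j, j ∈ suppF w → I.image (t j) = (suppF w).erase j := by
      intro j hj
      ext y
      rw [mem_image]
      constructor
      · rintro ⟨i, hi, rfl⟩
        have hpos : 0 < (I.filter fun x => t j x = t j i).card :=
          card_pos.2 ⟨i, mem_filter.2 ⟨hi, rfl⟩⟩
        rw [hposn j hj (t j i), sub_unitVec_apply] at hpos
        rw [mem_erase, mem_suppF]
        by_cases h : t j i = j
        · rw [h, if_pos rfl] at hpos
          have := hcase j
          exfalso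
          omega
        · rw [if_neg h] at hpos
          exact ⟨h, by omega⟩
      · intro hy
        obtain ⟨hyj, hyS⟩ := mem_erase.1 hy
        have h1 : (I.filter fun x => t j x = y).card = 1 := by
          rw [hposn j hj y, sub_unitVec_apply, if_neg hyj]
          have := hwS y hyS
          omega
        obtain ⟨i, hi⟩ := card_pos.1 (by omega : 0 < (I.filter fun x => t j x = y).card)
        obtain ⟨hiI, hiy⟩ := mem_filter.1 hi
        exact ⟨i, hiI, hiy⟩
    have hcardeq : ∀ j, j ∈ suppF w → I.card = ((suppF w).erase j).card := by
      intro j hj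
      rw [card_erase_of_mem hj, hcardS]
      omega
    have hEM : ∀ j ∈ suppF w, restGraph I (t j) = E.M I ((suppF w).erase j) := by
      intro j hj
      have hm1 : IsMatching (restGraph I (t j)) I ((suppF w).erase j) := by
        rw [← himage j hj]
        exact isMatching_restGraph (hinj j hj)
      have hm2 := E.matching I ((suppF w).erase j) (hcardeq j hj)
      exact hEcompat j hj I ((suppF w).erase j) (hcardeq j hj) I ((suppF w).erase j)
        (restGraph I (t j)) (E.M I ((suppF w).erase j)) (subset_refl _) (subset_refl _) hm1 hm2
    have hunion : ((suppF w).biUnion fun j => restGraph I (t j)) =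
        ((suppF w).biUnion fun j => E.M I ((suppF w).erase j)) := by
      apply biUnion_congr rfl
      exact hEM
    obtain ⟨htree, hdeg⟩ := E.rightLinkage I (suppF w) (by omega)
    rw [hunion]
    refine ⟨htree, ?_⟩
    intro i hi
    rw [hdeg i hi]
    omega
  · -- CASE 2 : some w c ≥ 2, peel off a leaf
    push_neg at hcase
    obtain ⟨c, hc2'⟩ := hcase
    have hc2 : 2 ≤ w c := hc2'
    have hcS : c ∈ suppF w := mem_suppF.2 (by omega)
    -- find i₀ with t c i₀ = c
    have hfib : 0 < (I.filter fun i => t c i = c).card := by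
      rw [hposn c hcS c, sub_unitVec_apply, if_pos rfl]
      omega
    obtain ⟨i₀, hmem⟩ := card_pos.1 hfib
    obtain ⟨hi₀I, ht_c⟩ := mem_filter.1 hmem
    -- all topes agree at i₀
    have hall : ∀ j ∈ suppF w, t j i₀ = c := by
      intro j hj
      by_cases hjc : j = c
      · rw [hjc]; exact ht_c
      · refine keyLemma (hcompat c j hcS hj) ?_ ?_ hi₀I ht_c
        · rw [hposn j hj c, hposn c hcS c, sub_unitVec_apply, sub_unitVec_apply,
            if_pos rfl, if_neg (fun h => hjc h.symm)]
          omega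
        · intro y hyne
          rw [hposn j hj y, hposn c hcS y, sub_unitVec_apply, sub_unitVec_apply,
            if_neg hyne]
          by_cases h : y = j <;> simp [h] <;> omega
    set I' := I.erase i₀ with hI'
    set w' := w - unitVec c with hw'
    have hsupp' : suppF w' = suppF w := by
      ext y
      rw [mem_suppF, mem_suppF, hw', sub_unitVec_apply]
      by_cases h : y = c
      · subst h; rw [if_pos rfl]; omega
      · rw [if_neg h, Nat.sub_zero]
    have hm1 : 1 ≤ m := by
      rw [← hcard]
      exact card_pos.2 ⟨i₀, hi₀I⟩
    have hcard' : I'.card = m - 1 := by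
      rw [hI', card_erase_of_mem hi₀I, hcard]
    have hsum' : (∑ j, w' j) = I'.card + 1 := by
      have := sum_sub_unitVec w c (by omega)
      rw [hcard']
      rw [← hw'] at this
      omega
    have hposn' : ∀ j, j ∈ suppF w' → ∀ y, (I'.filter fun i => t j i = y).card
        = (w' - unitVec j) y := by
      intro j hj y
      rw [hsupp'] at hj
      have hbase := hposn j hj y
      have hfe : I'.filter (fun i => t j i = y) = (I.filter fun i => t j i = y).erase i₀ := by
        rw [hI', Finset.filter_erase]
      rw [hfe]
      have htj := hall j hj
      by_cases hyc : y = c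
      · subst hyc
        have hmem2 : i₀ ∈ I.filter fun i => t j i = y := mem_filter.2 ⟨hi₀I, htj⟩
        rw [card_erase_of_mem hmem2, hbase]
        rw [sub_unitVec_apply, sub_unitVec_apply, hw', sub_unitVec_apply, if_pos rfl]
        by_cases h : (y:Fin d) = j <;> simp only [h, if_true, if_false, if_pos, if_neg] <;> omega
      · have hnmem : i₀ ∉ I.filter fun i => t j i = y := by
          intro hmem2
          exact hyc ((mem_filter.1 hmem2).2 ▸ htj ▸ rfl)
        rw [Finset.erase_eq_of_notMem hnmem, hbase]
        rw [sub_unitVec_apply, sub_unitVec_apply, hw', sub_unitVec_apply, if_neg hyc]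
        omega
    have hcompat' : ∀ j k, j ∈ suppF w' → k ∈ suppF w' →
        Compatible (restGraph I' (t j)) (restGraph I' (t k)) := by
      intro j k hj hk
      rw [hsupp'] at hj hk
      exact compatible_mono (hcompat j k hj hk) (restGraph_mono (erase_subset _ _) _)
        (restGraph_mono (erase_subset _ _) _)
    have hEcompat' : ∀ j, j ∈ suppF w' → ∀ I'' J'', I''.card = J''.card →
        Compatible (restGraph I' (t j)) (E.M I'' J'') := by
      intro j hj I'' J'' hcc
      rw [hsupp'] at hj
      exact compatible_mono (hEcompat j hj I'' J'' hcc) (restGraph_mono (erase_subset _ _) _)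
        (subset_refl _)
    obtain ⟨htree', hdeg'⟩ := IH (m-1) (by omega) I' w' t hcard' hsum' hposn' hcompat' hEcompat'
    rw [hsupp'] at htree' hdeg'
    -- U = insert (i₀, c) U'
    have hU : ((suppF w).biUnion fun j => restGraph I (t j)) =
        insert (i₀, c) ((suppF w).biUnion fun j => restGraph I' (t j)) := by
      ext e
      simp only [mem_biUnion, mem_insert, mem_restGraph]
      constructor
      · rintro ⟨j, hj, h1, h2⟩
        by_cases he : e.1 = i₀
        · left
          have : e.2 = c := by rw [← h2, he, hall j hj]
          exact Prod.ext he this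
        · right
          exact ⟨j, hj, mem_erase.2 ⟨he, h1⟩, h2⟩
      · rintro (rfl | ⟨j, hj, h1, h2⟩)
        · exact ⟨c, hcS, hi₀I, ht_c⟩
        · exact ⟨j, hj, (mem_erase.1 h1).2, h2⟩
    have hno : ∀ e ∈ ((suppF w).biUnion fun j => restGraph I' (t j)), e.1 ≠ i₀ := by
      intro e he
      obtain ⟨j, hj, hm2⟩ := mem_biUnion.1 he
      exact (mem_erase.1 (mem_restGraph.1 hm2).1).1
    have hi₀I' : i₀ ∉ I' := notMem_erase _ _
    have hIeq : insert i₀ I' = I := insert_erase hi₀I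
    constructor
    · rw [hU, ← hIeq]
      exact isTreeOn_insert hi₀I' hcS htree'
    · intro i hi
      rw [hU]
      by_cases he : i = i₀
      · subst he
        rw [LD_insert_self hno]
        omega
      · rw [LD_insert_ne he]
        exact hdeg' i (mem_erase.2 ⟨he, hi⟩)

end MainInduction

theorem statement4 {n d : ℕ} (E : MatchingEnsemble n d)
    (T : (Fin d → ℕ) → Fin n → Fin d)
    (hpos : ∀ v : Fin d → ℕ, (∑ j, v j) = n → topePos (T v) = v)
    (hcompat : ∀ v v' : Fin d → ℕ, (∑ j, v j) = n → (∑ j, v' j) = n →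
      Compatible (topeGraph (T v)) (topeGraph (T v')))
    (hME : ∀ v : Fin d → ℕ, (∑ j, v j) = n →
      ∀ (I : Finset (Fin n)) (J : Finset (Fin d)), I.card = J.card →
        Compatible (topeGraph (T v)) (E.M I J))
    (w : Fin d → ℕ) (hw : (∑ j, w j) = n + 1) :
    IsTreeOn (nablaUnion T w) Finset.univ (suppF w) ∧
      ∀ i : Fin n, 1 ≤ LD (nablaUnion T w) i ∧ LD (nablaUnion T w) i ≤ 2 := by
  classical
  have huc : (Finset.univ : Finset (Fin n)).card = n := by simp
  have hS : ∀ j ∈ suppF w, (∑ y, (w - unitVec j) y) = n := by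
    intro j hj
    have := sum_sub_unitVec w j (mem_suppF.1 hj)
    omega
  have h1 : (∑ j, w j) = (Finset.univ : Finset (Fin n)).card + 1 := by rw [huc]; exact hw
  have hposn : ∀ j, j ∈ suppF w → ∀ y,
      ((Finset.univ : Finset (Fin n)).filter fun i => T (w - unitVec j) i = y).card
        = (w - unitVec j) y := by
    intro j hj y
    exact congrFun (hpos (w - unitVec j) (hS j hj)) y
  have hcompat' : ∀ j k, j ∈ suppF w → k ∈ suppF w →
      Compatible (restGraph Finset.univ (T (w - unitVec j)))
        (restGraph Finset.univ (T (w - unitVec k))) := by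
    intro j k hj hk
    rw [restGraph_univ, restGraph_univ]
    exact hcompat _ _ (hS j hj) (hS k hk)
  have hE' : ∀ j, j ∈ suppF w → ∀ I' J', I'.card = J'.card →
      Compatible (restGraph Finset.univ (T (w - unitVec j))) (E.M I' J') := by
    intro j hj I' J' hcc
    rw [restGraph_univ]
    exact hME _ (hS j hj) I' J' hcc
  obtain ⟨ht1, ht2⟩ := lemmaG E (Finset.univ : Finset (Fin n)).card Finset.univ w
    (fun j => T (w - unitVec j)) rfl h1 hposn hcompat' hE'
  have heq : nablaUnion T w
      = (suppF w).biUnion fun j => restGraph Finset.univ (T (w - unitVec j)) := rfl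
  rw [heq]
  exact ⟨ht1, fun i => ht2 i (mem_univ i)⟩
end
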